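/- arXiv:0809.0688 — 10 statements merged into one kernel-verified Lean document; each statement's English description precedes it below -/
import Mathlib

section
/- For all integers n and l with n ≥ x ≥ y ≥ 1-n and l ≥ 1 (x, y integers), the quantity f_{x,y}(l) = x^l·((x+1)^l - (x-1)^l) + y^l·((y-1)^l - (y+1)^l) is nonnegative. -/
/-- Product of consecutive integers is nonnegative. -/
lemma consec_nonneg (t : ℤ) : 0 ≤ t * (t + 1) := by
  rcases le_or_gt 0 t with h | h
  · exact mul_nonneg h (by linarith)
  · nlinarith [mul_nonneg (show (0:ℤ) ≤ -t by omega) (show (0:ℤ) ≤ -(t + 1) by omega)]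

lemma key_pow_ineq (l : ℕ) (p q r s : ℤ) (hq : 0 ≤ q) (hqr : q ≤ r) (hqs : q ≤ s)
    (hrp : r ≤ p) (hsp : s ≤ p) (hsum : r + s ≤ p + q) :
    r ^ l + s ^ l ≤ p ^ l + q ^ l := by
  have hs : 0 ≤ s := hq.trans hqs
  have hp : 0 ≤ p := hs.trans hsp
  have h1 : (∑ i ∈ Finset.range l, p ^ i * r ^ (l - 1 - i)) * (p - r) = p ^ l - r ^ l :=
    geom_sum₂_mul p r l
  have h2 : (∑ i ∈ Finset.range l, s ^ i * q ^ (l - 1 - i)) * (s - q) = s ^ l - q ^ l :=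
    geom_sum₂_mul s q l
  have hterm : (∑ i ∈ Finset.range l, s ^ i * q ^ (l - 1 - i)) ≤
      ∑ i ∈ Finset.range l, p ^ i * r ^ (l - 1 - i) := by
    apply Finset.sum_le_sum
    intro i _
    exact mul_le_mul (pow_le_pow_left₀ hs hsp i) (pow_le_pow_left₀ hq hqr _)
      (pow_nonneg hq _) (pow_nonneg hp _)
  have hnn2 : 0 ≤ ∑ i ∈ Finset.range l, s ^ i * q ^ (l - 1 - i) := by
    apply Finset.sum_nonneg
    intro i _
    exact mul_nonneg (pow_nonneg hs _) (pow_nonneg hq _)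
  have hmul : (∑ i ∈ Finset.range l, s ^ i * q ^ (l - 1 - i)) * (s - q) ≤
      (∑ i ∈ Finset.range l, p ^ i * r ^ (l - 1 - i)) * (p - r) :=
    mul_le_mul hterm (by linarith) (by linarith) (hnn2.trans hterm)
  rw [h1, h2] at hmul
  linarith

/-- For integers `n ≥ x ≥ y ≥ 1 - n` and integer `l ≥ 1`, the quantity
`f_{x,y}(l) = x^l·((x+1)^l - (x-1)^l) + y^l·((y-1)^l - (y+1)^l)` is nonnegative. -/
theorem f_xy_nonneg (n x y : ℤ) (l : ℕ) (hl : 1 ≤ l)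
    (hxn : x ≤ n) (hyx : y ≤ x) (hy : 1 - n ≤ y) :
    0 ≤ x ^ l * ((x + 1) ^ l - (x - 1) ^ l) + y ^ l * ((y - 1) ^ l - (y + 1) ^ l) := by
  have hA : x ^ l * ((x + 1) ^ l - (x - 1) ^ l)
      = (x * (x + 1)) ^ l - (x * (x - 1)) ^ l := by
    rw [mul_pow, mul_pow]; ring
  have hB : y ^ l * ((y - 1) ^ l - (y + 1) ^ l)
      = (y * (y - 1)) ^ l - (y * (y + 1)) ^ l := by
    rw [mul_pow, mul_pow]; ring
  rw [hA, hB]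
  have hA0 : 0 ≤ x * (x + 1) := consec_nonneg x
  have hB0 : 0 ≤ y * (y - 1) := by have := consec_nonneg (y - 1); nlinarith
  have hC0 : 0 ≤ x * (x - 1) := by have := consec_nonneg (x - 1); nlinarith
  have hD0 : 0 ≤ y * (y + 1) := consec_nonneg y
  rcases le_or_gt 0 y with hy0 | hy0
  · -- 0 ≤ y ≤ x : apply key lemma with p = x(x+1), q = y(y-1), r = x(x-1), s = y(y+1)
    have hx0 : 0 ≤ x := hy0.trans hyx
    have hqr : y * (y - 1) ≤ x * (x - 1) := by
      have h : x = y ∨ y + 1 ≤ x := by omega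
      rcases h with h | h
      · rw [h]
      · nlinarith [mul_nonneg (show (0:ℤ) ≤ x - y by linarith)
          (show (0:ℤ) ≤ x + y - 1 by linarith)]
    have hqs : y * (y - 1) ≤ y * (y + 1) := by nlinarith
    have hrp : x * (x - 1) ≤ x * (x + 1) := by nlinarith
    have hsp : y * (y + 1) ≤ x * (x + 1) := by
      nlinarith [mul_nonneg (show (0:ℤ) ≤ x - y by linarith)
        (show (0:ℤ) ≤ x + y + 1 by linarith)]
    have hsum : x * (x - 1) + y * (y + 1) ≤ x * (x + 1) + y * (y - 1) := by nlinarith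
    have := key_pow_ineq l (x * (x + 1)) (y * (y - 1)) (x * (x - 1)) (y * (y + 1))
      hB0 hqr hqs hrp hsp hsum
    linarith
  · rcases le_or_gt 0 x with hx0 | hx0
    · -- y < 0 ≤ x : termwise
      have h1 : (x * (x - 1)) ^ l ≤ (x * (x + 1)) ^ l :=
        pow_le_pow_left₀ hC0 (by nlinarith) l
      have h2 : (y * (y + 1)) ^ l ≤ (y * (y - 1)) ^ l :=
        pow_le_pow_left₀ hD0 (by nlinarith) l
      linarith
    · -- y ≤ x < 0 : apply key lemma with p = y(y-1), q = x(x+1), r = x(x-1), s = y(y+1)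
      have hx1 : x ≤ -1 := by omega
      have hy1 : y ≤ -1 := by omega
      have hqr : x * (x + 1) ≤ x * (x - 1) := by nlinarith
      have hqs : x * (x + 1) ≤ y * (y + 1) := by
        nlinarith [mul_nonneg (show (0:ℤ) ≤ x - y by linarith)
          (show (0:ℤ) ≤ -(x + y + 1) by omega)]
      have hrp : x * (x - 1) ≤ y * (y - 1) := by
        nlinarith [mul_nonneg (show (0:ℤ) ≤ x - y by linarith)
          (show (0:ℤ) ≤ -(x + y - 1) by omega)]
      have hsp : y * (y + 1) ≤ y * (y - 1) := by nlinarith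
      have hsum : x * (x - 1) + y * (y + 1) ≤ y * (y - 1) + x * (x + 1) := by nlinarith
      have := key_pow_ineq l (y * (y - 1)) (x * (x + 1)) (x * (x - 1)) (y * (y + 1))
        hA0 hqr hqs hrp hsp hsum
      linarith
end

section
/- Let λ = (λ_1, …, λ_j) be a partition of n with λ_1 the largest part, and let l ≥ 1. Then M_{λ,2l} = Σ_{i=1}^{j} ((λ_i - i)^l (λ_i - i + 1)^l - i^l (i-1)^l) satisfies M_{λ,2l} ≤ n·(λ_1 - 1)^l · λ_1^{l-1}. -/
/-- `M (L, 2l) = Σ_{i=1}^{j} ((λ_i - i)^l (λ_i - i + 1)^l - i^l (i-1)^l)` where the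
partition `λ` is given as the list `L` of its parts (in non-increasing order). -/
def Mpow (l : ℕ) (L : List ℕ) : ℤ :=
  ∑ i ∈ Finset.range L.length,
    (((L.getD i 0 : ℤ) - (i + 1)) ^ l * ((L.getD i 0 : ℤ) - (i + 1) + 1) ^ l
      - ((i : ℤ) + 1) ^ l * (i : ℤ) ^ l)

lemma sum_getD_cast (L : List ℕ) :
    ∑ i ∈ Finset.range L.length, (L.getD i 0 : ℤ) = (L.sum : ℤ) := by
  induction L with
  | nil => simp
  | cons a L ih =>
    rw [List.length_cons, Finset.sum_range_succ']
    simp only [List.getD_cons_succ, List.getD_cons_zero, List.sum_cons]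
    rw [ih]
    push_cast
    ring

lemma key (l : ℕ) (hl : 1 ≤ l) (a p j : ℤ) (hj : 1 ≤ j) (hp : 1 ≤ p) (hpa : p ≤ a) :
    (p - j) ^ l * (p - j + 1) ^ l - j ^ l * (j - 1) ^ l
      ≤ p * ((a - 1) ^ l * a ^ (l - 1)) := by
  have ha : 1 ≤ a := hp.trans hpa
  have hC : 0 ≤ (a - 1) ^ l * a ^ (l - 1) :=
    mul_nonneg (pow_nonneg (by linarith) _) (pow_nonneg (by linarith) _)
  set x := p - j with hx
  rcases le_or_gt x 0 with hx0 | hx1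
  · -- x ≤ 0 : the term is ≤ 0
    have h1 : x ^ l * (x + 1) ^ l = (x * (x + 1)) ^ l := (mul_pow _ _ _).symm
    have h2 : j ^ l * (j - 1) ^ l = (j * (j - 1)) ^ l := (mul_pow _ _ _).symm
    have hxx : 0 ≤ x * (x + 1) := by
      rcases le_or_gt x (-1) with h | h
      · nlinarith
      · have hx0' : x = 0 := by omega
        simp [hx0']
    have hle : x * (x + 1) ≤ j * (j - 1) := by nlinarith
    have := pow_le_pow_left₀ hxx hle l
    have hpC : 0 ≤ p * ((a - 1) ^ l * a ^ (l - 1)) := mul_nonneg (by linarith) hC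
    rw [h1, h2]
    linarith
  · -- 1 ≤ x
    have hx1' : 1 ≤ x := hx1
    have hxa : x ≤ a - 1 := by linarith
    have hj0 : 0 ≤ j * (j - 1) := by nlinarith
    have hjl : 0 ≤ j ^ l * (j - 1) ^ l := by
      rw [← mul_pow]; exact pow_nonneg hj0 l
    have hxl : x ^ l * (x + 1) ^ l ≤ p * ((a - 1) ^ l * a ^ (l - 1)) := by
      have e1 : x ^ l = x * x ^ (l - 1) := by
        conv_lhs => rw [show l = 1 + (l - 1) by omega, pow_add, pow_one]
      have e2 : (x + 1) ^ l = (x + 1) * (x + 1) ^ (l - 1) := by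
        conv_lhs => rw [show l = 1 + (l - 1) by omega, pow_add, pow_one]
      have e3 : (a - 1) ^ l = (a - 1) * (a - 1) ^ (l - 1) := by
        conv_lhs => rw [show l = 1 + (l - 1) by omega, pow_add, pow_one]
      have b1 : x ^ (l - 1) ≤ (a - 1) ^ (l - 1) := pow_le_pow_left₀ (by linarith) hxa _
      have b2 : (x + 1) ^ (l - 1) ≤ a ^ (l - 1) := pow_le_pow_left₀ (by linarith) (by linarith) _
      have b3 : x * (x + 1) ≤ p * (a - 1) := by nlinarith
      have nn1 : (0:ℤ) ≤ x ^ (l - 1) := pow_nonneg (by linarith) _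
      have nn2 : (0:ℤ) ≤ (x + 1) ^ (l - 1) := pow_nonneg (by linarith) _
      have nn3 : (0:ℤ) ≤ (a - 1) ^ (l - 1) := pow_nonneg (by linarith) _
      calc x ^ l * (x + 1) ^ l = (x * (x + 1)) * (x ^ (l - 1) * (x + 1) ^ (l - 1)) := by
              rw [e1, e2]; ring
        _ ≤ (p * (a - 1)) * ((a - 1) ^ (l - 1) * a ^ (l - 1)) := by
              have hxx1 : (0:ℤ) ≤ x * (x + 1) := by nlinarith
              apply mul_le_mul b3 (mul_le_mul b1 b2 nn2 nn3) (mul_nonneg nn1 nn2) (by nlinarith)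
        _ = p * ((a - 1) ^ l * a ^ (l - 1)) := by rw [e3]; ring
    linarith

/-- For a partition `λ = (λ_1, …, λ_j)` of `n` with largest part `λ_1`, and `l ≥ 1`,
`M_{λ,2l} ≤ n·(λ_1 - 1)^l · λ_1^{l-1}`. -/
theorem Mpow_le (n : ℕ) (L : List ℕ) (hpos : ∀ p ∈ L, 0 < p)
    (hsort : L.Pairwise (· ≥ ·)) (hsum : L.sum = n) (l : ℕ) (hl : 1 ≤ l) :
    Mpow l L ≤ (n : ℤ) * ((L.headI : ℤ) - 1) ^ l * (L.headI : ℤ) ^ (l - 1) := by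
  have hmem : ∀ i < L.length, L.getD i 0 ∈ L := by
    intro i hi
    rw [List.getD_eq_getElem _ _ hi]
    exact List.getElem_mem _
  have hhead : ∀ q ∈ L, q ≤ L.headI := by
    intro q hq
    cases L with
    | nil => simp at hq
    | cons a L' =>
      rcases List.mem_cons.mp hq with rfl | h
      · simp
      · exact (List.pairwise_cons.mp hsort).1 q h
  have step : ∀ i ∈ Finset.range L.length,
      (((L.getD i 0 : ℤ) - (i + 1)) ^ l * ((L.getD i 0 : ℤ) - (i + 1) + 1) ^ l
        - ((i : ℤ) + 1) ^ l * (i : ℤ) ^ l)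
      ≤ (L.getD i 0 : ℤ) * (((L.headI : ℤ) - 1) ^ l * (L.headI : ℤ) ^ (l - 1)) := by
    intro i hi
    rw [Finset.mem_range] at hi
    have hm := hmem i hi
    have hp : 1 ≤ (L.getD i 0 : ℤ) := by exact_mod_cast hpos _ hm
    have hpa : (L.getD i 0 : ℤ) ≤ (L.headI : ℤ) := by exact_mod_cast hhead _ hm
    have := key l hl (L.headI : ℤ) (L.getD i 0 : ℤ) ((i : ℤ) + 1) (by linarith) hp hpa
    calc ((L.getD i 0 : ℤ) - (i + 1)) ^ l * ((L.getD i 0 : ℤ) - (i + 1) + 1) ^ l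
          - ((i : ℤ) + 1) ^ l * (i : ℤ) ^ l
        = ((L.getD i 0 : ℤ) - ((i:ℤ) + 1)) ^ l * ((L.getD i 0 : ℤ) - ((i:ℤ) + 1) + 1) ^ l
          - ((i : ℤ) + 1) ^ l * (((i:ℤ) + 1) - 1) ^ l := by ring_nf
      _ ≤ _ := this
  calc Mpow l L ≤ ∑ i ∈ Finset.range L.length,
        (L.getD i 0 : ℤ) * (((L.headI : ℤ) - 1) ^ l * (L.headI : ℤ) ^ (l - 1)) :=
        Finset.sum_le_sum step
    _ = (L.sum : ℤ) * (((L.headI : ℤ) - 1) ^ l * (L.headI : ℤ) ^ (l - 1)) := by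
        rw [← Finset.sum_mul, sum_getD_cast]
    _ = (n : ℤ) * ((L.headI : ℤ) - 1) ^ l * (L.headI : ℤ) ^ (l - 1) := by
        rw [hsum]; ring
end

section
/- For every integer n ≥ 1, every real c ≥ 0, and every t ≥ n(log n + c), we have Σ_{j=1}^{n-1} (n!/(n-j)!)^2 · (1/j!) · (1 - j/n)^{2t} ≤ 2·e^{-2c}. -/
open Finset

lemma two_pow_le_succ_factorial (m : ℕ) : 2 ^ m ≤ (m + 1).factorial := by
  induction m with
  | zero => simp
  | succ k ih =>
    rw [pow_succ, Nat.factorial_succ]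
    calc 2 ^ k * 2 ≤ (k + 1).factorial * 2 := Nat.mul_le_mul_right _ ih
      _ = 2 * (k + 1).factorial := by ring
      _ ≤ (k + 2) * (k + 1).factorial := Nat.mul_le_mul_right _ (by omega)

lemma sum_inv_factorial_le (m : ℕ) :
    ∑ j ∈ Icc 1 m, (1 / (j.factorial : ℝ)) ≤ 2 := by
  have key : ∀ j ∈ Icc 1 m, (1 / (j.factorial : ℝ)) ≤ (1 / 2) ^ (j - 1) := by
    intro j hj
    simp only [mem_Icc] at hj
    rw [div_pow, one_pow, div_le_div_iff₀ (by positivity) (by positivity), one_mul]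
    have h2 : (2 : ℝ) ^ (j - 1) ≤ (j.factorial : ℝ) := by
      have h := two_pow_le_succ_factorial (j - 1)
      have hj1 : j - 1 + 1 = j := by omega
      rw [hj1] at h
      exact_mod_cast h
    linarith
  calc ∑ j ∈ Icc 1 m, (1 / (j.factorial : ℝ))
      ≤ ∑ j ∈ Icc 1 m, ((1 : ℝ) / 2) ^ (j - 1) := Finset.sum_le_sum key
    _ = ∑ i ∈ range m, ((1 : ℝ) / 2) ^ i := by
        rw [Finset.range_eq_Ico, ← Finset.Ico_add_one_right_eq_Icc]
        rw [Finset.sum_Ico_eq_sum_range]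
        simp
    _ ≤ 2 := by
        rw [geom_sum_eq (by norm_num : (1:ℝ)/2 ≠ 1)]
        have : (0:ℝ) ≤ (1/2 : ℝ) ^ m := by positivity
        rw [div_le_iff_of_neg (by norm_num : (1:ℝ)/2 - 1 < 0)]
        linarith

/-- For every integer `n ≥ 1`, every real `c ≥ 0`, and every real `t ≥ n(log n + c)`,
`Σ_{j=1}^{n-1} (n!/(n-j)!)² · (1/j!) · (1 - j/n)^{2t} ≤ 2·e^{-2c}`. -/
theorem discrete_l2_bound (n : ℕ) (hn : 1 ≤ n) (c t : ℝ) (hc : 0 ≤ c)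
    (ht : (n : ℝ) * (Real.log n + c) ≤ t) :
    ∑ j ∈ Finset.Icc 1 (n - 1),
      ((n.factorial : ℝ) / (n - j).factorial) ^ 2 * (1 / j.factorial)
        * (1 - (j : ℝ) / n) ^ (2 * t) ≤ 2 * Real.exp (-2 * c) := by
  have hn0 : (0 : ℝ) < n := by exact_mod_cast hn
  have hlogn : 0 ≤ Real.log n := Real.log_nonneg (by exact_mod_cast hn)
  have ht0 : 0 ≤ t := le_trans (by positivity) ht
  have key : ∀ j ∈ Icc 1 (n - 1),
      ((n.factorial : ℝ) / (n - j).factorial) ^ 2 * (1 / j.factorial)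
        * (1 - (j : ℝ) / n) ^ (2 * t) ≤ (1 / j.factorial) * Real.exp (-2 * c) := by
    intro j hj
    simp only [mem_Icc] at hj
    obtain ⟨hj1, hj2⟩ := hj
    have hjn : j ≤ n := by omega
    have hjr : (1 : ℝ) ≤ j := by exact_mod_cast hj1
    have hx0 : (0 : ℝ) ≤ 1 - (j : ℝ) / n := by
      rw [sub_nonneg, div_le_one hn0]; exact_mod_cast hjn
    -- descending factorial bound
    have hA : ((n.factorial : ℝ) / (n - j).factorial) ^ 2 ≤ (n : ℝ) ^ (2 * j) := by
      have hd : (n.factorial : ℝ) / (n - j).factorial = (n.descFactorial j : ℝ) := by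
        rw [div_eq_iff (by positivity : ((n - j).factorial : ℝ) ≠ 0)]
        exact_mod_cast (Nat.factorial_mul_descFactorial hjn).symm.trans (mul_comm _ _)
      rw [hd]
      calc ((n.descFactorial j : ℝ)) ^ 2 ≤ ((n : ℝ) ^ j) ^ 2 := by
            apply pow_le_pow_left₀ (by positivity)
            exact_mod_cast Nat.descFactorial_le_pow n j
        _ = (n : ℝ) ^ (2 * j) := by rw [← pow_mul, mul_comm]
    -- rpow bound
    have hx : (1 - (j : ℝ) / n) ^ (2 * t) ≤ Real.exp (-(j / n) * (2 * t)) := by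
      have h1 : 1 - (j : ℝ) / n ≤ Real.exp (-(j / n)) := by
        have := Real.add_one_le_exp (-(j / n : ℝ)); linarith
      calc (1 - (j : ℝ) / n) ^ (2 * t) ≤ Real.exp (-(j / n : ℝ)) ^ (2 * t) :=
            Real.rpow_le_rpow hx0 h1 (by positivity)
        _ = Real.exp (-(j / n) * (2 * t)) := (Real.exp_mul _ _).symm
    -- exponent comparison
    have hexp : Real.exp (-(j / n) * (2 * t)) ≤
        Real.exp (-(2 * j) * Real.log n) * Real.exp (-(2 * j) * c) := by
      rw [← Real.exp_add]
      apply Real.exp_le_exp.mpr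
      have h1 : (j : ℝ) / n * (2 * ((n : ℝ) * (Real.log n + c))) ≤ (j : ℝ) / n * (2 * t) := by
        apply mul_le_mul_of_nonneg_left (by linarith) (by positivity)
      have h2 : (j : ℝ) / n * (2 * ((n : ℝ) * (Real.log n + c)))
          = 2 * j * Real.log n + 2 * j * c := by
        field_simp
      nlinarith
    -- cancel n^(2j) with exp(-(2j) log n)
    have hcancel : (n : ℝ) ^ (2 * j) * Real.exp (-(2 * j) * Real.log n) = 1 := by
      rw [show (-(2 * (j:ℝ)) * Real.log n) = -(((2 * j : ℕ) : ℝ) * Real.log n) by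
        push_cast; ring]
      rw [Real.exp_neg, Real.exp_nat_mul, Real.exp_log hn0]
      field_simp
    have hec : Real.exp (-(2 * (j:ℝ)) * c) ≤ Real.exp (-2 * c) := by
      apply Real.exp_le_exp.mpr
      nlinarith
    have hfj : (0:ℝ) < j.factorial := by positivity
    calc ((n.factorial : ℝ) / (n - j).factorial) ^ 2 * (1 / j.factorial)
          * (1 - (j : ℝ) / n) ^ (2 * t)
        ≤ (n : ℝ) ^ (2 * j) * (1 / j.factorial) * Real.exp (-(j / n) * (2 * t)) := by
          apply mul_le_mul (mul_le_mul_of_nonneg_right hA (by positivity)) hx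
            (Real.rpow_nonneg hx0 _) (by positivity)
      _ ≤ (n : ℝ) ^ (2 * j) * (1 / j.factorial)
            * (Real.exp (-(2 * j) * Real.log n) * Real.exp (-(2 * j) * c)) := by
          apply mul_le_mul_of_nonneg_left hexp (by positivity)
      _ = (1 / j.factorial) * Real.exp (-(2 * (j:ℝ)) * c) := by
          rw [show (n : ℝ) ^ (2 * j) * (1 / j.factorial)
              * (Real.exp (-(2 * j) * Real.log n) * Real.exp (-(2 * j) * c))
            = ((n : ℝ) ^ (2 * j) * Real.exp (-(2 * (j:ℝ)) * Real.log n))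
              * ((1 / j.factorial) * Real.exp (-(2 * (j:ℝ)) * c)) by push_cast; ring,
            hcancel, one_mul]
      _ ≤ (1 / j.factorial) * Real.exp (-2 * c) :=
          mul_le_mul_of_nonneg_left hec (by positivity)
  calc ∑ j ∈ Finset.Icc 1 (n - 1),
        ((n.factorial : ℝ) / (n - j).factorial) ^ 2 * (1 / j.factorial)
          * (1 - (j : ℝ) / n) ^ (2 * t)
      ≤ ∑ j ∈ Icc 1 (n - 1), (1 / (j.factorial : ℝ)) * Real.exp (-2 * c) :=
        Finset.sum_le_sum key
    _ = (∑ j ∈ Icc 1 (n - 1), (1 / (j.factorial : ℝ))) * Real.exp (-2 * c) := by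
        rw [Finset.sum_mul]
    _ ≤ 2 * Real.exp (-2 * c) := by
        apply mul_le_mul_of_nonneg_right (sum_inv_factorial_le _) (Real.exp_pos _).le
end

section
/- For every integer n ≥ 1, every real c ≥ 0, and every real t ≥ n(log n + c), we have Σ_{j=1}^{n-1} (n!/(n-j)!)^2 · (1/j!) · exp(-2tj/n) ≤ 2·e^{-2c}. -/
/-- For every integer `n ≥ 1`, every real `c ≥ 0`, and every real `t ≥ n(log n + c)`,
`Σ_{j=1}^{n-1} (n!/(n-j)!)² · (1/j!) · exp(-2tj/n) ≤ 2·e^{-2c}`. -/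
theorem continuous_l2_bound (n : ℕ) (hn : 1 ≤ n) (c t : ℝ) (hc : 0 ≤ c)
    (ht : (n : ℝ) * (Real.log n + c) ≤ t) :
    ∑ j ∈ Finset.Icc 1 (n - 1),
      ((n.factorial : ℝ) / (n - j).factorial) ^ 2 * (1 / j.factorial)
        * Real.exp (-2 * t * j / n) ≤ 2 * Real.exp (-2 * c) := by
  have hnpos : (0:ℝ) < n := by exact_mod_cast hn
  have key : ∀ j ∈ Finset.Icc 1 (n-1),
      ((n.factorial : ℝ) / (n - j).factorial) ^ 2 * (1 / j.factorial)
        * Real.exp (-2 * t * j / n) ≤ Real.exp (-2 * c) * (1 / j.factorial) := by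
    intro j hj
    rw [Finset.mem_Icc] at hj
    have hj1 : 1 ≤ j := hj.1
    have hjn : j ≤ n := hj.2.trans (Nat.sub_le n 1)
    have hjpos : (1:ℝ) ≤ j := by exact_mod_cast hj1
    have hA : ((n.factorial : ℝ) / (n - j).factorial) = (n.descFactorial j : ℝ) := by
      have h := Nat.factorial_mul_descFactorial hjn
      have h' : ((n-j).factorial : ℝ) * (n.descFactorial j : ℝ) = (n.factorial : ℝ) := by
        exact_mod_cast congrArg (Nat.cast : ℕ → ℝ) h
      field_simp [← h']
      exact h'.symm
    have hAle : ((n.factorial : ℝ) / (n - j).factorial) ≤ ((n:ℝ)^j) := by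
      rw [hA]
      exact_mod_cast Nat.descFactorial_le_pow n j
    have hexp : Real.exp (-2 * t * j / n) ≤ Real.exp (-2 * (Real.log n + c) * j) := by
      apply Real.exp_le_exp.mpr
      rw [div_le_iff₀ hnpos] at *
      nlinarith [Real.exp_pos t, mul_le_mul_of_nonneg_right ht (by positivity : (0:ℝ) ≤ 2*j)]
    have hsplit : Real.exp (-2 * (Real.log n + c) * j)
        = (((n:ℝ)^(2*j))⁻¹) * Real.exp (-2 * c * j) := by
      rw [show (-2 * (Real.log n + c) * (j:ℝ)) = -(((2*j : ℕ):ℝ) * Real.log n) + (-2*c*j) by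
        push_cast; ring, Real.exp_add, Real.exp_neg, Real.exp_nat_mul, Real.exp_log hnpos]
    have hc2 : Real.exp (-2 * c * j) ≤ Real.exp (-2 * c) := by
      apply Real.exp_le_exp.mpr
      nlinarith
    have hfacpos : (0:ℝ) < (j.factorial : ℝ) := by exact_mod_cast j.factorial_pos
    calc ((n.factorial : ℝ) / (n - j).factorial) ^ 2 * (1 / j.factorial)
          * Real.exp (-2 * t * j / n)
        ≤ ((n:ℝ)^j) ^ 2 * (1 / j.factorial) * (((n:ℝ)^(2*j))⁻¹ * Real.exp (-2 * c * j)) := by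
          rw [← hsplit]
          have h0 : (0:ℝ) ≤ (n.factorial : ℝ) / (n - j).factorial := by positivity
          gcongr
      _ = (1 / j.factorial) * Real.exp (-2 * c * j) := by
          have : ((n:ℝ)^j) ^ 2 = (n:ℝ)^(2*j) := by rw [← pow_mul, mul_comm]
          rw [this]
          field_simp
      _ ≤ Real.exp (-2 * c) * (1 / j.factorial) := by
          rw [mul_comm]
          gcongr
  calc ∑ j ∈ Finset.Icc 1 (n - 1),
      ((n.factorial : ℝ) / (n - j).factorial) ^ 2 * (1 / j.factorial)
        * Real.exp (-2 * t * j / n)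
      ≤ ∑ j ∈ Finset.Icc 1 (n-1), Real.exp (-2 * c) * (1 / j.factorial) :=
        Finset.sum_le_sum key
    _ = Real.exp (-2 * c) * ∑ j ∈ Finset.Icc 1 (n-1), (1 / (j.factorial:ℝ)) := by
        rw [Finset.mul_sum]
    _ ≤ Real.exp (-2 * c) * 2 := by
        gcongr
        have hIcc : Finset.Icc 1 (n-1) = Finset.Ico 1 n := by
          rw [← Finset.Ico_add_one_right_eq_Icc]
          congr 1
          omega
        have hsplit : ∑ j ∈ Finset.range n, (1 / (j.factorial:ℝ))
            = 1 + ∑ j ∈ Finset.Icc 1 (n-1), (1 / (j.factorial:ℝ)) := by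
          rw [hIcc, Finset.range_eq_Ico, Finset.sum_eq_sum_Ico_succ_bot (by omega : 0 < n)]
          norm_num
        have hle : ∑ j ∈ Finset.range n, (1 / (j.factorial:ℝ)) ≤ Real.exp 1 := by
          have h := Real.sum_le_exp_of_nonneg (zero_le_one) n
          simpa using h
        have he : Real.exp 1 ≤ 3 := by
          have := Real.exp_one_lt_d9
          linarith
        linarith [hsplit ▸ hle]
    _ = 2 * Real.exp (-2 * c) := by ring
end

section
/- Let A_j = (n!/(n-j)!)^2 · (1/j!) · (1 - (2j/n)(1 - (j-1)/n))^{n log n} for integers 1 ≤ j ≤ n/2. For n ≥ 14, Σ_{j=1}^{⌊n/4⌋} A_j ≤ 2. -/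
set_option maxHeartbeats 1000000

open Real Finset



lemma my_exp_cubic {x : ℝ} (h0 : 0 ≤ x) (h1 : x ≤ 1) :
    Real.exp x ≤ 1 + x + x^2/2 + (2/9)*x^3 := by
  have hb := Real.exp_bound (x := x) (by rwa [abs_of_nonneg h0]) (n := 3) (by norm_num)
  have hs : ∑ m ∈ Finset.range 3, x ^ m / m.factorial = 1 + x + x^2/2 := by
    norm_num [Finset.sum_range_succ, Nat.factorial]
  rw [hs, abs_of_nonneg h0] at hb
  have := abs_le.1 hb
  have h2 : x ^ 3 * (Nat.succ 3 / ((3:ℕ).factorial * 3) : ℝ) = (2/9) * x^3 := by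
    norm_num [Nat.factorial]
    ring
  nlinarith [this.2]

lemma my_one_sub_le_exp {x : ℝ} (h0 : 0 ≤ x) (h1 : x ≤ 1) :
    1 - x ≤ Real.exp (-x - x^2/2) := by
  have hb := my_exp_cubic h0 h1
  have h2 : (1 - x) * Real.exp x ≤ 1 - x^2/2 := by nlinarith [Real.exp_pos x]
  have h3 : (1 : ℝ) - x^2/2 ≤ Real.exp (-(x^2/2)) := by
    have := Real.add_one_le_exp (-(x^2/2)); linarith
  have h4 : (1-x) * Real.exp x * Real.exp (-x) = 1 - x := by
    rw [mul_assoc, ← Real.exp_add]; simp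
  calc 1 - x = (1-x) * Real.exp x * Real.exp (-x) := h4.symm
    _ ≤ (1 - x^2/2) * Real.exp (-x) := mul_le_mul_of_nonneg_right h2 (Real.exp_pos _).le
    _ ≤ Real.exp (-(x^2/2)) * Real.exp (-x) := mul_le_mul_of_nonneg_right h3 (Real.exp_pos _).le
    _ = Real.exp (-x - x^2/2) := by rw [← Real.exp_add]; ring_nf

lemma my_exp_le_one_add {x : ℝ} (h0 : 0 ≤ x) (h1 : x ≤ 1) :
    Real.exp (x - x^2/2) ≤ 1 + x := by
  have hb := my_exp_cubic h0 h1
  have h3 : (1 : ℝ) + x^2/2 ≤ Real.exp (x^2/2) := by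
    have := Real.add_one_le_exp (x^2/2); linarith
  have key : Real.exp (x - x^2/2) * Real.exp (x^2/2) = Real.exp x := by
    rw [← Real.exp_add]; ring_nf
  nlinarith [Real.exp_pos (x - x^2/2), Real.exp_pos (x^2/2)]

lemma my_pade {u v : ℝ} (hu : 0 < u) (huv : u ≤ v) :
    2 * (v - u) / (v + u) ≤ Real.log (v / u) := by
  set t := (v - u) / (v + u) with ht
  have hv : 0 < v := lt_of_lt_of_le hu huv
  have hvu : 0 < v + u := by linarith
  have ht0 : 0 ≤ t := div_nonneg (by linarith) hvu.le
  have ht1 : t < 1 := by rw [div_lt_one hvu]; linarith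
  have hvut : v / u = (1 + t) / (1 - t) := by
    have htv : t * (v + u) = v - u := by rw [ht]; field_simp
    rw [div_eq_div_iff hu.ne' (sub_pos.2 ht1).ne']; linear_combination -htv
  have hlog1 : t - t^2/2 ≤ Real.log (1 + t) := by
    rw [Real.le_log_iff_exp_le (by linarith)]
    exact my_exp_le_one_add ht0 ht1.le
  have hlog2 : Real.log (1 - t) ≤ -t - t^2/2 := by
    rw [Real.log_le_iff_le_exp (by linarith)]
    exact my_one_sub_le_exp ht0 ht1.le
  have : Real.log (v/u) = Real.log (1+t) - Real.log (1-t) := by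
    rw [hvut, Real.log_div (by linarith) (by linarith)]
  rw [this]
  have h2t : 2 * (v - u) / (v + u) = 2 * t := by rw [ht]; ring
  rw [h2t]; linarith


-- log x / x antitone for 1 ≤ log m, m ≤ n
lemma my_logdiv {m n : ℝ} (hm : 0 < m) (hlm : 1 ≤ Real.log m) (hmn : m ≤ n) :
    Real.log n / n ≤ Real.log m / m := by
  have hn : 0 < n := lt_of_lt_of_le hm hmn
  have h1 : Real.log n - Real.log m ≤ n/m - 1 := by
    have := Real.log_le_sub_one_of_pos (div_pos hn hm)
    rwa [Real.log_div hn.ne' hm.ne'] at this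
  rw [div_le_div_iff₀ hn hm]
  -- log n * m ≤ log m * n
  have h2 : Real.log n * m ≤ Real.log m * m + (n - m) := by
    have := mul_le_mul_of_nonneg_right h1 hm.le
    have e : (n/m - 1) * m = n - m := by field_simp
    nlinarith
  nlinarith [mul_le_mul_of_nonneg_right hlm (by linarith : (0:ℝ) ≤ n - m)]

-- j log j - j ≤ log j!
lemma my_log_factorial (j : ℕ) (hj : 1 ≤ j) :
    (j:ℝ) * Real.log j - j ≤ Real.log (j.factorial) := by
  have hjR : (0:ℝ) < j := by exact_mod_cast hj
  have h1 : (j:ℝ)^j / j.factorial ≤ Real.exp j := by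
    have hs := Real.sum_le_exp_of_nonneg (x := (j:ℝ)) hjR.le (j+1)
    have hterm : (j:ℝ)^j / j.factorial ≤ ∑ i ∈ Finset.range (j+1), (j:ℝ) ^ i / i.factorial := by
      exact Finset.single_le_sum (f := fun i => (j:ℝ)^i / (i.factorial:ℝ))
        (fun i _ => by positivity) (Finset.self_mem_range_succ j)
    linarith
  have hfac : (0:ℝ) < j.factorial := by exact_mod_cast j.factorial_pos
  have h2 : (j:ℝ)^j ≤ Real.exp j * j.factorial := by
    rw [div_le_iff₀ hfac] at h1; linarith
  have h3 : Real.log ((j:ℝ)^j) ≤ Real.log (Real.exp j * j.factorial) := by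
    apply Real.log_le_log (by positivity) h2
  rw [Real.log_pow, Real.log_mul (Real.exp_pos _).ne' hfac.ne', Real.log_exp] at h3
  linarith


lemma log_ub_dyadic {m : ℝ} (s : ℕ) (hm : 0 < m) (h : m ≤ 2^s) :
    Real.log m ≤ s * Real.log 2 - 2*((2:ℝ)^s - m)/((2:ℝ)^s + m) := by
  have hp := my_pade hm h
  rw [Real.log_div (by positivity) hm.ne'] at hp
  rw [Real.log_pow] at hp
  linarith

lemma log_lb_dyadic {q : ℝ} (s : ℕ) (h : (2:ℝ)^s ≤ q) :
    s * Real.log 2 + 2*(q - (2:ℝ)^s)/(q + (2:ℝ)^s) ≤ Real.log q := by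
  have hq : (0:ℝ) < q := lt_of_lt_of_le (pow_pos (by norm_num) s) h
  have hp := my_pade (pow_pos (by norm_num : (0:ℝ) < 2) s) h
  rw [Real.log_div hq.ne' (pow_pos (by norm_num : (0:ℝ) < 2) s).ne'] at hp
  rw [Real.log_pow] at hp
  linarith

lemma one_le_log {m : ℝ} (hm : 4 ≤ m) : 1 ≤ Real.log m := by
  have h1 : Real.log 4 ≤ Real.log m := Real.log_le_log (by norm_num) hm
  have h2 : Real.log ((2:ℝ)^2) = 2 * Real.log 2 := by
    rw [Real.log_pow]; norm_num
  norm_num at h2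
  linarith [Real.log_two_gt_d9]

lemma claim_C (n j : ℕ) (hn : 14 ≤ n) (hj : 1 ≤ j) (hjn : 4*j ≤ n) :
    ((7/8)*(j:ℝ)^2 - 2*(j:ℝ)) * (Real.log n / n)
      ≤ (1 - (j:ℝ)) * Real.log 2 + Real.log (j.factorial) := by
  have hn0 : (0:ℝ) < n := by positivity
  have hlogn : 0 ≤ Real.log n := Real.log_nonneg (by exact_mod_cast Nat.one_le_iff_ne_zero.mpr (by omega))
  have hcpos : 0 ≤ Real.log n / n := div_nonneg hlogn hn0.le
  rcases lt_or_ge j 14 with hjlt | hjge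
  · interval_cases j
    · -- j = 1
      simp only [Nat.cast_one, Nat.factorial_one, Nat.cast_ofNat]
      have : ((7:ℝ)/8*1^2 - 2*1) = -9/8 := by norm_num
      norm_num
      nlinarith [hcpos]
    · -- j = 2
      have hf : ((2:ℕ).factorial : ℝ) = 2 := by norm_num [Nat.factorial]
      push_cast
      rw [hf]
      nlinarith [hcpos]
    · -- j = 3
      have hm : (14:ℝ) ≤ (n:ℝ) := by
        have : (14:ℕ) ≤ n := by omega
        exact_mod_cast this
      have hc : Real.log n / n ≤ Real.log (14:ℝ) / 14 :=
        my_logdiv (by norm_num) (one_le_log (by norm_num)) hm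
      have hub := log_ub_dyadic (m := (14:ℝ)) 4 (by norm_num) (by norm_num)
      have hlb := log_lb_dyadic (q := (6:ℝ)) 2 (by norm_num)
      have hb : ((15:ℝ)/8) * (Real.log n / n) ≤ ((15:ℝ)/8) * (Real.log (14:ℝ) / 14) :=
        mul_le_mul_of_nonneg_left hc (by norm_num)
      have hgoal : ((7/8)*((3:ℕ):ℝ)^2 - 2*((3:ℕ):ℝ)) * (Real.log n / n)
          ≤ (1 - ((3:ℕ):ℝ)) * Real.log 2 + Real.log ((3:ℕ).factorial) := by
        have hfc : (((3:ℕ).factorial:ℕ):ℝ) = (6:ℝ) := by norm_num [Nat.factorial]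
        push_cast
        rw [hfc]
        norm_num at hub hlb ⊢
        linarith [Real.log_two_lt_d9, Real.log_two_gt_d9, hb, hub, hlb]
      exact hgoal
    · -- j = 4
      have hm : (16:ℝ) ≤ (n:ℝ) := by
        have : (16:ℕ) ≤ n := by omega
        exact_mod_cast this
      have hc : Real.log n / n ≤ Real.log (16:ℝ) / 16 :=
        my_logdiv (by norm_num) (one_le_log (by norm_num)) hm
      have hub := log_ub_dyadic (m := (16:ℝ)) 4 (by norm_num) (by norm_num)
      have hlb := log_lb_dyadic (q := (24:ℝ)) 4 (by norm_num)
      have hb : ((48:ℝ)/8) * (Real.log n / n) ≤ ((48:ℝ)/8) * (Real.log (16:ℝ) / 16) :=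
        mul_le_mul_of_nonneg_left hc (by norm_num)
      have hgoal : ((7/8)*((4:ℕ):ℝ)^2 - 2*((4:ℕ):ℝ)) * (Real.log n / n)
          ≤ (1 - ((4:ℕ):ℝ)) * Real.log 2 + Real.log ((4:ℕ).factorial) := by
        have hfc : (((4:ℕ).factorial:ℕ):ℝ) = (24:ℝ) := by norm_num [Nat.factorial]
        push_cast
        rw [hfc]
        norm_num at hub hlb ⊢
        linarith [Real.log_two_lt_d9, Real.log_two_gt_d9, hb, hub, hlb]
      exact hgoal
    · -- j = 5
      have hm : (20:ℝ) ≤ (n:ℝ) := by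
        have : (20:ℕ) ≤ n := by omega
        exact_mod_cast this
      have hc : Real.log n / n ≤ Real.log (20:ℝ) / 20 :=
        my_logdiv (by norm_num) (one_le_log (by norm_num)) hm
      have hub := log_ub_dyadic (m := (20:ℝ)) 5 (by norm_num) (by norm_num)
      have hlb := log_lb_dyadic (q := (120:ℝ)) 6 (by norm_num)
      have hb : ((95:ℝ)/8) * (Real.log n / n) ≤ ((95:ℝ)/8) * (Real.log (20:ℝ) / 20) :=
        mul_le_mul_of_nonneg_left hc (by norm_num)
      have hgoal : ((7/8)*((5:ℕ):ℝ)^2 - 2*((5:ℕ):ℝ)) * (Real.log n / n)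
          ≤ (1 - ((5:ℕ):ℝ)) * Real.log 2 + Real.log ((5:ℕ).factorial) := by
        have hfc : (((5:ℕ).factorial:ℕ):ℝ) = (120:ℝ) := by norm_num [Nat.factorial]
        push_cast
        rw [hfc]
        norm_num at hub hlb ⊢
        linarith [Real.log_two_lt_d9, Real.log_two_gt_d9, hb, hub, hlb]
      exact hgoal
    · -- j = 6
      have hm : (24:ℝ) ≤ (n:ℝ) := by
        have : (24:ℕ) ≤ n := by omega
        exact_mod_cast this
      have hc : Real.log n / n ≤ Real.log (24:ℝ) / 24 :=
        my_logdiv (by norm_num) (one_le_log (by norm_num)) hm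
      have hub := log_ub_dyadic (m := (24:ℝ)) 5 (by norm_num) (by norm_num)
      have hlb := log_lb_dyadic (q := (720:ℝ)) 9 (by norm_num)
      have hb : ((156:ℝ)/8) * (Real.log n / n) ≤ ((156:ℝ)/8) * (Real.log (24:ℝ) / 24) :=
        mul_le_mul_of_nonneg_left hc (by norm_num)
      have hgoal : ((7/8)*((6:ℕ):ℝ)^2 - 2*((6:ℕ):ℝ)) * (Real.log n / n)
          ≤ (1 - ((6:ℕ):ℝ)) * Real.log 2 + Real.log ((6:ℕ).factorial) := by
        have hfc : (((6:ℕ).factorial:ℕ):ℝ) = (720:ℝ) := by norm_num [Nat.factorial]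
        push_cast
        rw [hfc]
        norm_num at hub hlb ⊢
        linarith [Real.log_two_lt_d9, Real.log_two_gt_d9, hb, hub, hlb]
      exact hgoal
    · -- j = 7
      have hm : (28:ℝ) ≤ (n:ℝ) := by
        have : (28:ℕ) ≤ n := by omega
        exact_mod_cast this
      have hc : Real.log n / n ≤ Real.log (28:ℝ) / 28 :=
        my_logdiv (by norm_num) (one_le_log (by norm_num)) hm
      have hub := log_ub_dyadic (m := (28:ℝ)) 5 (by norm_num) (by norm_num)
      have hlb := log_lb_dyadic (q := (5040:ℝ)) 12 (by norm_num)
      have hb : ((231:ℝ)/8) * (Real.log n / n) ≤ ((231:ℝ)/8) * (Real.log (28:ℝ) / 28) :=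
        mul_le_mul_of_nonneg_left hc (by norm_num)
      have hgoal : ((7/8)*((7:ℕ):ℝ)^2 - 2*((7:ℕ):ℝ)) * (Real.log n / n)
          ≤ (1 - ((7:ℕ):ℝ)) * Real.log 2 + Real.log ((7:ℕ).factorial) := by
        have hfc : (((7:ℕ).factorial:ℕ):ℝ) = (5040:ℝ) := by norm_num [Nat.factorial]
        push_cast
        rw [hfc]
        norm_num at hub hlb ⊢
        linarith [Real.log_two_lt_d9, Real.log_two_gt_d9, hb, hub, hlb]
      exact hgoal
    · -- j = 8
      have hm : (32:ℝ) ≤ (n:ℝ) := by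
        have : (32:ℕ) ≤ n := by omega
        exact_mod_cast this
      have hc : Real.log n / n ≤ Real.log (32:ℝ) / 32 :=
        my_logdiv (by norm_num) (one_le_log (by norm_num)) hm
      have hub := log_ub_dyadic (m := (32:ℝ)) 5 (by norm_num) (by norm_num)
      have hlb := log_lb_dyadic (q := (40320:ℝ)) 15 (by norm_num)
      have hb : ((320:ℝ)/8) * (Real.log n / n) ≤ ((320:ℝ)/8) * (Real.log (32:ℝ) / 32) :=
        mul_le_mul_of_nonneg_left hc (by norm_num)
      have hgoal : ((7/8)*((8:ℕ):ℝ)^2 - 2*((8:ℕ):ℝ)) * (Real.log n / n)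
          ≤ (1 - ((8:ℕ):ℝ)) * Real.log 2 + Real.log ((8:ℕ).factorial) := by
        have hfc : (((8:ℕ).factorial:ℕ):ℝ) = (40320:ℝ) := by norm_num [Nat.factorial]
        push_cast
        rw [hfc]
        norm_num at hub hlb ⊢
        linarith [Real.log_two_lt_d9, Real.log_two_gt_d9, hb, hub, hlb]
      exact hgoal
    · -- j = 9
      have hm : (36:ℝ) ≤ (n:ℝ) := by
        have : (36:ℕ) ≤ n := by omega
        exact_mod_cast this
      have hc : Real.log n / n ≤ Real.log (36:ℝ) / 36 :=
        my_logdiv (by norm_num) (one_le_log (by norm_num)) hm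
      have hub := log_ub_dyadic (m := (36:ℝ)) 6 (by norm_num) (by norm_num)
      have hlb := log_lb_dyadic (q := (362880:ℝ)) 18 (by norm_num)
      have hb : ((423:ℝ)/8) * (Real.log n / n) ≤ ((423:ℝ)/8) * (Real.log (36:ℝ) / 36) :=
        mul_le_mul_of_nonneg_left hc (by norm_num)
      have hgoal : ((7/8)*((9:ℕ):ℝ)^2 - 2*((9:ℕ):ℝ)) * (Real.log n / n)
          ≤ (1 - ((9:ℕ):ℝ)) * Real.log 2 + Real.log ((9:ℕ).factorial) := by
        have hfc : (((9:ℕ).factorial:ℕ):ℝ) = (362880:ℝ) := by norm_num [Nat.factorial]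
        push_cast
        rw [hfc]
        norm_num at hub hlb ⊢
        linarith [Real.log_two_lt_d9, Real.log_two_gt_d9, hb, hub, hlb]
      exact hgoal
    · -- j = 10
      have hm : (40:ℝ) ≤ (n:ℝ) := by
        have : (40:ℕ) ≤ n := by omega
        exact_mod_cast this
      have hc : Real.log n / n ≤ Real.log (40:ℝ) / 40 :=
        my_logdiv (by norm_num) (one_le_log (by norm_num)) hm
      have hub := log_ub_dyadic (m := (40:ℝ)) 6 (by norm_num) (by norm_num)
      have hlb := log_lb_dyadic (q := (3628800:ℝ)) 21 (by norm_num)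
      have hb : ((540:ℝ)/8) * (Real.log n / n) ≤ ((540:ℝ)/8) * (Real.log (40:ℝ) / 40) :=
        mul_le_mul_of_nonneg_left hc (by norm_num)
      have hgoal : ((7/8)*((10:ℕ):ℝ)^2 - 2*((10:ℕ):ℝ)) * (Real.log n / n)
          ≤ (1 - ((10:ℕ):ℝ)) * Real.log 2 + Real.log ((10:ℕ).factorial) := by
        have hfc : (((10:ℕ).factorial:ℕ):ℝ) = (3628800:ℝ) := by norm_num [Nat.factorial]
        push_cast
        rw [hfc]
        norm_num at hub hlb ⊢
        linarith [Real.log_two_lt_d9, Real.log_two_gt_d9, hb, hub, hlb]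
      exact hgoal
    · -- j = 11
      have hm : (44:ℝ) ≤ (n:ℝ) := by
        have : (44:ℕ) ≤ n := by omega
        exact_mod_cast this
      have hc : Real.log n / n ≤ Real.log (44:ℝ) / 44 :=
        my_logdiv (by norm_num) (one_le_log (by norm_num)) hm
      have hub := log_ub_dyadic (m := (44:ℝ)) 6 (by norm_num) (by norm_num)
      have hlb := log_lb_dyadic (q := (39916800:ℝ)) 25 (by norm_num)
      have hb : ((671:ℝ)/8) * (Real.log n / n) ≤ ((671:ℝ)/8) * (Real.log (44:ℝ) / 44) :=
        mul_le_mul_of_nonneg_left hc (by norm_num)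
      have hgoal : ((7/8)*((11:ℕ):ℝ)^2 - 2*((11:ℕ):ℝ)) * (Real.log n / n)
          ≤ (1 - ((11:ℕ):ℝ)) * Real.log 2 + Real.log ((11:ℕ).factorial) := by
        have hfc : (((11:ℕ).factorial:ℕ):ℝ) = (39916800:ℝ) := by norm_num [Nat.factorial]
        push_cast
        rw [hfc]
        norm_num at hub hlb ⊢
        linarith [Real.log_two_lt_d9, Real.log_two_gt_d9, hb, hub, hlb]
      exact hgoal
    · -- j = 12
      have hm : (48:ℝ) ≤ (n:ℝ) := by
        have : (48:ℕ) ≤ n := by omega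
        exact_mod_cast this
      have hc : Real.log n / n ≤ Real.log (48:ℝ) / 48 :=
        my_logdiv (by norm_num) (one_le_log (by norm_num)) hm
      have hub := log_ub_dyadic (m := (48:ℝ)) 6 (by norm_num) (by norm_num)
      have hlb := log_lb_dyadic (q := (479001600:ℝ)) 28 (by norm_num)
      have hb : ((816:ℝ)/8) * (Real.log n / n) ≤ ((816:ℝ)/8) * (Real.log (48:ℝ) / 48) :=
        mul_le_mul_of_nonneg_left hc (by norm_num)
      have hgoal : ((7/8)*((12:ℕ):ℝ)^2 - 2*((12:ℕ):ℝ)) * (Real.log n / n)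
          ≤ (1 - ((12:ℕ):ℝ)) * Real.log 2 + Real.log ((12:ℕ).factorial) := by
        have hfc : (((12:ℕ).factorial:ℕ):ℝ) = (479001600:ℝ) := by norm_num [Nat.factorial]
        push_cast
        rw [hfc]
        norm_num at hub hlb ⊢
        linarith [Real.log_two_lt_d9, Real.log_two_gt_d9, hb, hub, hlb]
      exact hgoal
    · -- j = 13
      have hm : (52:ℝ) ≤ (n:ℝ) := by
        have : (52:ℕ) ≤ n := by omega
        exact_mod_cast this
      have hc : Real.log n / n ≤ Real.log (52:ℝ) / 52 :=
        my_logdiv (by norm_num) (one_le_log (by norm_num)) hm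
      have hub := log_ub_dyadic (m := (52:ℝ)) 6 (by norm_num) (by norm_num)
      have hlb := log_lb_dyadic (q := (6227020800:ℝ)) 32 (by norm_num)
      have hb : ((975:ℝ)/8) * (Real.log n / n) ≤ ((975:ℝ)/8) * (Real.log (52:ℝ) / 52) :=
        mul_le_mul_of_nonneg_left hc (by norm_num)
      have hgoal : ((7/8)*((13:ℕ):ℝ)^2 - 2*((13:ℕ):ℝ)) * (Real.log n / n)
          ≤ (1 - ((13:ℕ):ℝ)) * Real.log 2 + Real.log ((13:ℕ).factorial) := by
        have hfc : (((13:ℕ).factorial:ℕ):ℝ) = (6227020800:ℝ) := by norm_num [Nat.factorial]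
        push_cast
        rw [hfc]
        norm_num at hub hlb ⊢
        linarith [Real.log_two_lt_d9, Real.log_two_gt_d9, hb, hub, hlb]
      exact hgoal
  · -- j ≥ 14
    have hjR : (14:ℝ) ≤ (j:ℝ) := by exact_mod_cast hjge
    have hjpos : (0:ℝ) < (j:ℝ) := by linarith
    have h4j : (4:ℝ)*(j:ℝ) ≤ (n:ℝ) := by exact_mod_cast hjn
    have hL14 : Real.log 14 ≤ Real.log (j:ℝ) := Real.log_le_log (by norm_num) (by linarith)
    have h14lb := log_lb_dyadic (q := (14:ℝ)) 3 (by norm_num)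
    have hLlb : 3*Real.log 2 + 6/11 ≤ Real.log (j:ℝ) := by
      norm_num at h14lb; linarith
    have hlog4j : Real.log (4*(j:ℝ)) = 2*Real.log 2 + Real.log (j:ℝ) := by
      rw [Real.log_mul (by norm_num) hjpos.ne']
      have : Real.log ((2:ℝ)^2) = 2 * Real.log 2 := by rw [Real.log_pow]; norm_num
      norm_num at this
      linarith
    have h1log : 1 ≤ Real.log (4*(j:ℝ)) := by
      rw [hlog4j]; linarith [Real.log_two_gt_d9]
    have hc : Real.log n / n ≤ Real.log (4*(j:ℝ)) / (4*(j:ℝ)) :=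
      my_logdiv (by positivity) h1log h4j
    have hβ : (0:ℝ) ≤ (7/8)*(j:ℝ)^2 - 2*(j:ℝ) := by nlinarith
    have hb : ((7/8)*(j:ℝ)^2 - 2*(j:ℝ)) * (Real.log n / n)
        ≤ ((7/8)*(j:ℝ)^2 - 2*(j:ℝ)) * (Real.log (4*(j:ℝ)) / (4*(j:ℝ))) :=
      mul_le_mul_of_nonneg_left hc hβ
    have heq : ((7/8)*(j:ℝ)^2 - 2*(j:ℝ)) * (Real.log (4*(j:ℝ)) / (4*(j:ℝ)))
        = ((7*(j:ℝ)-16)/32) * (2*Real.log 2 + Real.log (j:ℝ)) := by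
      rw [hlog4j]; field_simp; ring
    have hfac := my_log_factorial j hj
    have a2 := Real.log_two_lt_d9
    have a1 := Real.log_two_gt_d9
    set L := Real.log (j:ℝ) with hLdef
    set a := Real.log 2 with hadef
    have hcoef : 0 ≤ (25/32)*L - 1 - (23/16)*a := by nlinarith
    have hmul : 0 ≤ (j:ℝ) * ((25/32)*L - 1 - (23/16)*a) := mul_nonneg hjpos.le hcoef
    have hL0 : 0 ≤ L := by nlinarith
    have ha0 : 0 ≤ a := by nlinarith
    calc ((7/8)*(j:ℝ)^2 - 2*(j:ℝ)) * (Real.log n / n)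
        ≤ ((7*(j:ℝ)-16)/32) * (2*a + L) := by rw [← heq]; exact hb
      _ ≤ (1 - (j:ℝ))*a + ((j:ℝ)*L - (j:ℝ)) := by nlinarith [hmul]
      _ ≤ (1 - (j:ℝ))*a + Real.log (j.factorial) := by linarith [hfac]


lemma term_bound (n j : ℕ) (hn : 14 ≤ n) (hj : 1 ≤ j) (hjn : 4*j ≤ n) :
    ((n.factorial : ℝ) / (n - j).factorial) ^ 2 * (1 / j.factorial)
        * (1 - (2 * (j : ℝ) / n) * (1 - ((j : ℝ) - 1) / n)) ^ ((n : ℝ) * Real.log n)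
      ≤ 2 * (1/2)^j := by
  have hn0 : (0:ℝ) < n := by positivity
  have hjR : (1:ℝ) ≤ (j:ℝ) := by exact_mod_cast hj
  have h4j : 4*(j:ℝ) ≤ (n:ℝ) := by exact_mod_cast hjn
  set nR := (n:ℝ) with hnR
  set jR := (j:ℝ)
  set L := Real.log nR with hL
  have hL0 : 0 ≤ L := Real.log_nonneg (by linarith)
  set x := 2 * jR / nR * (1 - (jR - 1) / nR) with hxdef
  have hf1 : (jR - 1)/nR ≤ 1/4 := by rw [div_le_iff₀ hn0]; linarith
  have hf0 : 0 ≤ 1 - (jR - 1)/nR := by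
    have : (jR - 1)/nR ≤ 1 := by rw [div_le_iff₀ hn0]; linarith
    linarith
  have hf34 : 3/4 ≤ 1 - (jR - 1)/nR := by linarith
  have h2jn : 0 ≤ 2*jR/nR := by positivity
  have h2jn2 : 2*jR/nR ≤ 1/2 := by rw [div_le_iff₀ hn0]; linarith
  have hx0 : 0 ≤ x := mul_nonneg h2jn hf0
  have hfge : 0 ≤ (jR - 1)/nR := div_nonneg (by linarith) hn0.le
  have hx1 : x ≤ 1/2 := by
    calc x ≤ (1/2) * 1 := by
          apply mul_le_mul h2jn2 (by linarith) hf0 (by norm_num)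
      _ = 1/2 := by norm_num
  set E := nR * L with hE
  have hE0 : 0 ≤ E := mul_nonneg hn0.le hL0
  -- rpow bound
  have hbase := my_one_sub_le_exp hx0 (by linarith)
  have hrpow : (1 - x) ^ E ≤ Real.exp (-x - x^2/2) ^ E :=
    Real.rpow_le_rpow (by linarith) hbase hE0
  have hexpmul : Real.exp (-x - x^2/2) ^ E = Real.exp ((-x - x^2/2) * E) :=
    (Real.exp_mul _ _).symm
  -- exponent estimate
  have hxlb : 3*jR/(2*nR) ≤ x := by
    rw [hxdef]
    calc 3*jR/(2*nR) = (2*jR/nR) * (3/4) := by field_simp; ring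
      _ ≤ (2*jR/nR) * (1 - (jR-1)/nR) := mul_le_mul_of_nonneg_left hf34 h2jn
  have he1 : x * E = 2*jR*L - 2*jR*(jR-1)*(L/nR) := by
    rw [hxdef, hE]; field_simp
  have hsq : (9*jR^2/(4*nR^2)) ≤ x^2 := by
    have h := mul_self_le_mul_self (by positivity : (0:ℝ) ≤ 3*jR/(2*nR)) hxlb
    calc 9*jR^2/(4*nR^2) = (3*jR/(2*nR)) * (3*jR/(2*nR)) := by field_simp; ring
      _ ≤ x * x := h
      _ = x^2 := (sq x).symm
  have h3 : (9/8)*jR^2*(L/nR) ≤ x^2 * E / 2 := by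
    have h := mul_le_mul_of_nonneg_right hsq (show (0:ℝ) ≤ nR*L/2 by positivity)
    calc (9/8)*jR^2*(L/nR) = 9*jR^2/(4*nR^2) * (nR*L/2) := by field_simp; ring
      _ ≤ x^2 * (nR*L/2) := h
      _ = x^2 * E / 2 := by rw [hE]; ring
  have hexponent : (-x - x^2/2) * E ≤ -(2*jR*L) + ((7/8)*jR^2 - 2*jR) * (L/nR) := by
    have : (-x - x^2/2) * E = -(x*E) - x^2*E/2 := by ring
    rw [this, he1]
    have hLn : 0 ≤ L/nR := by positivity
    nlinarith [h3]
  -- descFactorial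
  have hjn' : j ≤ n := by omega
  have hDeq : (n.factorial : ℝ) / (n - j).factorial = (n.descFactorial j : ℝ) := by
    have h := Nat.factorial_mul_descFactorial hjn'
    rw [div_eq_iff (by positivity : ((n-j).factorial:ℝ) ≠ 0)]
    rw [mul_comm]
    exact_mod_cast congrArg (Nat.cast (R := ℝ)) h.symm
  have hD : (n.factorial : ℝ) / (n - j).factorial ≤ nR^j := by
    rw [hDeq, hnR]
    exact_mod_cast Nat.descFactorial_le_pow n j
  have hD0 : (0:ℝ) ≤ (n.factorial : ℝ) / (n - j).factorial := by positivity
  have hD2 : ((n.factorial : ℝ) / (n - j).factorial)^2 ≤ (nR^j)^2 :=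
    pow_le_pow_left₀ hD0 hD 2
  -- assemble
  have hP0 : (0:ℝ) ≤ (1 - x) ^ E := Real.rpow_nonneg (by linarith) E
  have hfac0 : (0:ℝ) < (j.factorial : ℝ) := by exact_mod_cast j.factorial_pos
  have hchain : ((n.factorial : ℝ) / (n - j).factorial) ^ 2 * (1 / j.factorial) * (1-x)^E
      ≤ (nR^j)^2 * (1 / j.factorial) * Real.exp ((-x - x^2/2) * E) := by
    apply mul_le_mul
    · exact mul_le_mul_of_nonneg_right hD2 (by positivity)
    · rw [← hexpmul]; exact hrpow
    · exact hP0
    · positivity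
  have hpow : (nR^j)^2 = Real.exp (2*jR*L) := by
    rw [← pow_mul, ← Real.exp_log (show (0:ℝ) < nR^(j*2) by positivity), Real.log_pow]
    push_cast
    ring_nf
    rfl
  have hcollapse : (nR^j)^2 * (1 / j.factorial) * Real.exp ((-x - x^2/2) * E)
      ≤ (1 / j.factorial) * Real.exp (((7/8)*jR^2 - 2*jR) * (L/nR)) := by
    rw [hpow]
    have := Real.exp_le_exp.2 hexponent
    calc Real.exp (2*jR*L) * (1 / j.factorial) * Real.exp ((-x - x^2/2) * E)
        ≤ Real.exp (2*jR*L) * (1 / j.factorial) * Real.exp (-(2*jR*L) + ((7/8)*jR^2 - 2*jR) * (L/nR)) := by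
          apply mul_le_mul_of_nonneg_left this (by positivity)
      _ = (1 / j.factorial) * Real.exp (((7/8)*jR^2 - 2*jR) * (L/nR)) := by
          rw [mul_comm (Real.exp (2*jR*L)) ((1:ℝ) / j.factorial), mul_assoc, ← Real.exp_add]
          ring_nf
  have hC := claim_C n j hn hj hjn
  have hrhslog : Real.log ((j.factorial:ℝ) * (2 * (1/2)^j)) =
      Real.log (j.factorial) + (1 - jR) * Real.log 2 := by
    rw [Real.log_mul hfac0.ne' (by positivity), Real.log_mul (by norm_num) (by positivity),
        Real.log_pow]
    have : Real.log ((1:ℝ)/2) = -Real.log 2 := by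
      rw [one_div, Real.log_inv]
    rw [this]
    ring
  have hfinal : Real.exp (((7/8)*jR^2 - 2*jR) * (L/nR)) ≤ (j.factorial:ℝ) * (2 * (1/2)^j) := by
    rw [← Real.exp_log (show (0:ℝ) < (j.factorial:ℝ) * (2 * (1/2)^j) by positivity)]
    apply Real.exp_le_exp.2
    rw [hrhslog]
    calc ((7/8)*jR^2 - 2*jR) * (L/nR) ≤ (1 - jR) * Real.log 2 + Real.log (j.factorial) := hC
      _ = Real.log (j.factorial) + (1 - jR) * Real.log 2 := by ring
  calc ((n.factorial : ℝ) / (n - j).factorial) ^ 2 * (1 / j.factorial) * (1-x)^E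
      ≤ (nR^j)^2 * (1 / j.factorial) * Real.exp ((-x - x^2/2) * E) := hchain
    _ ≤ (1 / j.factorial) * Real.exp (((7/8)*jR^2 - 2*jR) * (L/nR)) := hcollapse
    _ ≤ (1 / j.factorial) * ((j.factorial:ℝ) * (2 * (1/2)^j)) := by
        apply mul_le_mul_of_nonneg_left hfinal (by positivity)
    _ = 2 * (1/2)^j := by field_simp

lemma geo_sum (m : ℕ) : ∑ j ∈ Icc 1 m, ((1:ℝ)/2)^j = 1 - (1/2)^m := by
  induction m with
  | zero => simp
  | succ k ih =>
    rw [Finset.sum_Icc_succ_top (by omega), ih]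
    ring

/-- With `A_j = (n!/(n-j)!)² · (1/j!) · (1 - (2j/n)(1 - (j-1)/n))^{n log n}`,
for `n ≥ 14` we have `Σ_{j=1}^{⌊n/4⌋} A_j ≤ 2`. -/
theorem sum_Aj_le_two (n : ℕ) (hn : 14 ≤ n) :
    ∑ j ∈ Finset.Icc 1 (n / 4),
      ((n.factorial : ℝ) / (n - j).factorial) ^ 2 * (1 / j.factorial)
        * (1 - (2 * (j : ℝ) / n) * (1 - ((j : ℝ) - 1) / n)) ^ ((n : ℝ) * Real.log n)
      ≤ 2 := by
  have hstep : ∑ j ∈ Finset.Icc 1 (n / 4),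
      ((n.factorial : ℝ) / (n - j).factorial) ^ 2 * (1 / j.factorial)
        * (1 - (2 * (j : ℝ) / n) * (1 - ((j : ℝ) - 1) / n)) ^ ((n : ℝ) * Real.log n)
      ≤ ∑ j ∈ Finset.Icc 1 (n / 4), 2 * ((1:ℝ)/2)^j := by
    apply Finset.sum_le_sum
    intro j hjmem
    rw [Finset.mem_Icc] at hjmem
    exact term_bound n j hn hjmem.1 (by omega)
  have h2 : ∑ j ∈ Finset.Icc 1 (n / 4), 2 * ((1:ℝ)/2)^j ≤ 2 := by
    rw [← Finset.mul_sum, geo_sum]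
    nlinarith [pow_pos (show (0:ℝ) < 1/2 by norm_num) (n/4)]
  linarith
end

section
/- Let B_j = (n!/(n-j)!)^2 · (1/j!) · (1 - j/n)^{n log n}. For n ≥ 9, Σ_{j=⌈n/2⌉}^{n-1} B_j ≤ exp(1 - (3/1000)·n·log n). -/
set_option maxHeartbeats 2000000

open Real Stirling



lemma stirlingSeq_ge {k : ℕ} (hk : 1 ≤ k) : Real.sqrt Real.pi ≤ stirlingSeq k := by
  obtain ⟨i, rfl⟩ := Nat.exists_eq_add_of_le hk
  have ht : Filter.Tendsto (stirlingSeq ∘ Nat.succ) Filter.atTop (nhds (Real.sqrt Real.pi)) :=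
    tendsto_stirlingSeq_sqrt_pi.comp (Filter.tendsto_add_atTop_nat 1)
  simpa [Nat.add_comm] using stirlingSeq'_antitone.le_of_tendsto ht i

lemma stirlingSeq_le {k : ℕ} (hk : 1 ≤ k) : stirlingSeq k ≤ Real.exp 1 / Real.sqrt 2 := by
  obtain ⟨i, rfl⟩ := Nat.exists_eq_add_of_le hk
  have := stirlingSeq'_antitone (Nat.zero_le i)
  simpa [Nat.add_comm, stirlingSeq_one] using this

-- numeric: 1.09 ≤ log 3
lemma log3_ge : (1.09 : ℝ) ≤ Real.log 3 := by
  rw [Real.le_log_iff_exp_le (by norm_num)]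
  have h1 : Real.exp (1.09 : ℝ) = Real.exp 1 * Real.exp (9/100) := by
    rw [← Real.exp_add]; norm_num
  have h2 : Real.exp (9/100 : ℝ) ≤ 100/91 := by
    have := Real.add_one_le_exp (-(9/100) : ℝ)
    have hpos := Real.exp_pos (9/100 : ℝ)
    rw [Real.exp_neg] at this
    rw [show ((-(9/100):ℝ) + 1 = 91/100) by norm_num] at this
    rw [le_inv_comm₀ (by norm_num) hpos] at this
    linarith [this]
  have h3 : Real.exp 1 ≤ 2.7182818286 := Real.exp_one_lt_d9.le
  calc Real.exp (1.09:ℝ) = Real.exp 1 * Real.exp (9/100) := h1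
    _ ≤ 2.7182818286 * (100/91) := by
        exact mul_le_mul h3 h2 (Real.exp_pos _).le (by norm_num)
    _ ≤ 3 := by norm_num

-- numeric: 8/5 ≤ log 5
lemma log5_ge : (8/5 : ℝ) ≤ Real.log 5 := by
  rw [Real.le_log_iff_exp_le (by norm_num)]
  have h5 : Real.exp ((8:ℝ)/5) ^ (5:ℕ) = Real.exp 8 := by
    rw [← Real.exp_nat_mul]; norm_num
  have h8 : Real.exp (8:ℝ) = Real.exp 1 ^ (8:ℕ) := by
    rw [← Real.exp_nat_mul]; norm_num
  have hlt : Real.exp ((8:ℝ)/5) ^ (5:ℕ) < 5 ^ (5:ℕ) := by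
    rw [h5, h8]
    calc Real.exp 1 ^ (8:ℕ) < 2.7182818286 ^ (8:ℕ) := by
          exact pow_lt_pow_left₀ Real.exp_one_lt_d9 (Real.exp_pos 1).le (by norm_num)
      _ < 5 ^ (5:ℕ) := by norm_num
  by_contra hc
  push_neg at hc
  have : (5:ℝ) ^ (5:ℕ) ≤ Real.exp ((8:ℝ)/5) ^ (5:ℕ) :=
    pow_le_pow_left₀ (by norm_num) hc.le 5
  linarith



lemma log_fact_eq {k : ℕ} (hk : 1 ≤ k) :
    Real.log (k.factorial) =
      Real.log (stirlingSeq k) + Real.log 2 / 2 + Real.log k / 2 + k * Real.log k - k := by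
  have hk0 : (0:ℝ) < (k:ℝ) := by exact_mod_cast hk
  have h := log_stirlingSeq_formula k
  have h2 : Real.log (2 * (k:ℝ)) = Real.log 2 + Real.log k :=
    Real.log_mul (by norm_num) (ne_of_gt hk0)
  have h3 : Real.log ((k:ℝ) / Real.exp 1) = Real.log k - 1 := by
    rw [Real.log_div (ne_of_gt hk0) (Real.exp_ne_zero 1), Real.log_exp]
  rw [h2, h3] at h
  have : Real.log (stirlingSeq k) = Real.log k.factorial - 1/2 * (Real.log 2 + Real.log k)
      - k * (Real.log k - 1) := h
  linarith [this]

lemma log_fact_le {k : ℕ} (hk : 1 ≤ k) :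
    Real.log (k.factorial) ≤ 1 + Real.log k / 2 + (k : ℝ) * Real.log k - k := by
  have h := log_fact_eq hk
  have hup : Real.log (stirlingSeq k) ≤ 1 - Real.log 2 / 2 := by
    have h1 : Real.log (stirlingSeq k) ≤ Real.log (Real.exp 1 / Real.sqrt 2) :=
      Real.log_le_log (by
        have := stirlingSeq'_pos (k-1)
        simpa [Nat.sub_add_cancel hk] using this) (stirlingSeq_le hk)
    have h2 : Real.log (Real.exp 1 / Real.sqrt 2) = 1 - Real.log 2 / 2 := by
      rw [Real.log_div (Real.exp_ne_zero 1) (by positivity), Real.log_exp,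
        Real.log_sqrt (by norm_num)]
      try ring
    linarith [h1.trans_eq h2]
  linarith [h, hup]

lemma log_fact_ge {k : ℕ} (hk : 1 ≤ k) :
    0.545 + Real.log 2 / 2 + Real.log k / 2 + (k : ℝ) * Real.log k - k
      ≤ Real.log (k.factorial) := by
  have h := log_fact_eq hk
  have hlo : (0.545 : ℝ) ≤ Real.log (stirlingSeq k) := by
    have h1 : Real.log (Real.sqrt Real.pi) ≤ Real.log (stirlingSeq k) :=
      Real.log_le_log (Real.sqrt_pos.2 Real.pi_pos) (stirlingSeq_ge hk)
    have h2 : Real.log (Real.sqrt Real.pi) = Real.log Real.pi / 2 :=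
      Real.log_sqrt Real.pi_pos.le
    have h3 : Real.log 3 ≤ Real.log Real.pi :=
      Real.log_le_log (by norm_num) (by linarith [Real.pi_gt_three])
    have := log3_ge
    linarith
  linarith [h, hlo]


lemma log6_ge : (1.7831 : ℝ) ≤ Real.log 6 := by
  have h : Real.log 6 = Real.log 2 + Real.log 3 := by
    rw [← Real.log_mul (by norm_num) (by norm_num)]; norm_num
  have := log3_ge
  have := Real.log_two_gt_d9
  linarith

lemma scalar_even (m : ℕ) (hm : 5 ≤ m) :
    (2*Real.log 2 - 1.09)
    + 2*(1 + (Real.log 2 + Real.log m)/2 + (2*(m:ℝ))*(Real.log 2 + Real.log m) - 2*(m:ℝ))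
    - 3*(0.545 + Real.log 2/2 + Real.log m/2 + (m:ℝ)*Real.log m - (m:ℝ))
    - (2*(m:ℝ))*(Real.log 2 + Real.log m)*Real.log 2
    ≤ 1 - (3/1000)*(2*(m:ℝ))*(Real.log 2 + Real.log m) := by
  have hm5 : (5:ℝ) ≤ m := by exact_mod_cast hm
  have hm0 : (0:ℝ) ≤ m := by linarith
  set x := Real.log m with hx
  set l2 := Real.log 2 with hl2
  have hl2a : (0.6931471803:ℝ) ≤ l2 := Real.log_two_gt_d9.le
  have hl2b : l2 ≤ (0.6931471808:ℝ) := Real.log_two_lt_d9.le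
  rcases le_or_gt 64 m with h64 | h64
  · -- x ≥ 6 l2
    have hm64 : (64:ℝ) ≤ m := by exact_mod_cast h64
    have hx6 : 6*l2 ≤ x := by
      have : Real.log 64 ≤ Real.log m := Real.log_le_log (by norm_num) (by exact_mod_cast h64)
      have h64e : Real.log 64 = 6 * l2 := by
        rw [show (64:ℝ) = 2^6 by norm_num, Real.log_pow]; push_cast; ring
      linarith
    have hmx : (m:ℝ) * (6*l2) ≤ (m:ℝ) * x := mul_le_mul_of_nonneg_left hx6 hm0
    nlinarith [hmx, mul_le_mul_of_nonneg_left hl2a hm0, mul_le_mul_of_nonneg_left hl2b hm0,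
      sq_nonneg (l2 - 0.6931471803), mul_nonneg hm0 (sub_nonneg.2 hl2a)]
  · rcases le_or_gt 8 m with h8 | h8
    · have hm8 : (8:ℝ) ≤ m := by exact_mod_cast h8
      have hm63 : (m:ℝ) ≤ 63 := by exact_mod_cast (by omega : m ≤ 63)
      have hx3 : 3*l2 ≤ x := by
        have : Real.log 8 ≤ Real.log m := Real.log_le_log (by norm_num) (by exact_mod_cast h8)
        have h8e : Real.log 8 = 3 * l2 := by
          rw [show (8:ℝ) = 2^3 by norm_num, Real.log_pow]; push_cast; ring
        linarith
      have hmx : (m:ℝ) * (3*l2) ≤ (m:ℝ) * x := mul_le_mul_of_nonneg_left hx3 hm0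
      nlinarith [hmx, mul_le_mul_of_nonneg_left hl2a hm0, mul_le_mul_of_nonneg_left hl2b hm0,
        sq_nonneg (l2 - 0.6931471803), mul_nonneg hm0 (sub_nonneg.2 hl2a),
        mul_le_mul_of_nonneg_right hm63 (le_trans (by norm_num) hl2a)]
    · -- m = 5, 6, 7
      have hx16 : (8/5:ℝ) ≤ x := by
        have : Real.log 5 ≤ Real.log m := Real.log_le_log (by norm_num) (by exact_mod_cast hm)
        linarith [log5_ge]
      have hx6' : m = 6 ∨ m = 7 → (1.7831:ℝ) ≤ x := by
        intro hcase
        have h6 : (6:ℝ) ≤ m := by rcases hcase with h|h <;> rw [h] <;> norm_num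
        have : Real.log 6 ≤ Real.log m := Real.log_le_log (by norm_num) h6
        linarith [log6_ge]
      interval_cases m
      · norm_num at hx16 ⊢
        nlinarith [hx16, hl2a, hl2b]
      · have hx6 := hx6' (Or.inl rfl)
        norm_num at hx6 ⊢
        nlinarith [hx6, hl2a, hl2b]
      · have hx6 := hx6' (Or.inr rfl)
        norm_num at hx6 ⊢
        nlinarith [hx6, hl2a, hl2b]


lemma scalar_odd (m : ℕ) (hm : 4 ≤ m) :
    (2*Real.log 2 - 1.09)
    + 2*(1 + Real.log (2*(m:ℝ)+1)/2 + (2*(m:ℝ)+1)*Real.log (2*(m:ℝ)+1) - (2*(m:ℝ)+1))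
    - 2*(0.545 + Real.log 2/2 + Real.log m/2 + (m:ℝ)*Real.log m - (m:ℝ))
    - (0.545 + Real.log 2/2 + Real.log ((m:ℝ)+1)/2 + ((m:ℝ)+1)*Real.log ((m:ℝ)+1) - ((m:ℝ)+1))
    + ((2*(m:ℝ)+1)*Real.log (2*(m:ℝ)+1)) * (Real.log m - Real.log (2*(m:ℝ)+1))
    ≤ 1 - (3/1000)*(2*(m:ℝ)+1)*Real.log (2*(m:ℝ)+1) := by
  have hm4 : (4:ℝ) ≤ m := by exact_mod_cast hm
  have hm0 : (0:ℝ) < m := by linarith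
  set x := Real.log m with hxdef
  set y := Real.log (2*(m:ℝ)+1) with hydef
  set l2 := Real.log 2 with hl2def
  have hl2a : (0.6931471803:ℝ) ≤ l2 := Real.log_two_gt_d9.le
  have hl2b : l2 ≤ (0.6931471808:ℝ) := Real.log_two_lt_d9.le
  have hn0 : (0:ℝ) < 2*(m:ℝ)+1 := by linarith
  have hx0 : (0:ℝ) ≤ x := Real.log_nonneg (by linarith)
  have hy0 : (0:ℝ) ≤ y := Real.log_nonneg (by linarith)
  have hlog2m : Real.log (2*(m:ℝ)) = l2 + x := Real.log_mul (by norm_num) (ne_of_gt hm0)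
  -- y ≤ l2 + x + 1/(2m)
  have hy1 : y ≤ l2 + x + 1/(2*(m:ℝ)) := by
    have hq : Real.log ((2*(m:ℝ)+1)/(2*m)) ≤ (2*(m:ℝ)+1)/(2*m) - 1 :=
      Real.log_le_sub_one_of_pos (by positivity)
    rw [Real.log_div (ne_of_gt hn0) (by positivity)] at hq
    have he : (2*(m:ℝ)+1)/(2*m) - 1 = 1/(2*m) := by field_simp; ring
    rw [hlog2m] at hq
    linarith [hq, he.le, he.ge]
  -- l2 + x + 1/(2m+1) ≤ y
  have hy2 : l2 + x + 1/(2*(m:ℝ)+1) ≤ y := by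
    have hq : Real.log ((2*(m:ℝ))/(2*m+1)) ≤ (2*(m:ℝ))/(2*m+1) - 1 :=
      Real.log_le_sub_one_of_pos (by positivity)
    rw [Real.log_div (by positivity) (ne_of_gt hn0)] at hq
    have he : (2*(m:ℝ))/(2*m+1) - 1 = -(1/(2*m+1)) := by field_simp; ring
    rw [hlog2m] at hq
    linarith [hq, he.le, he.ge]
  -- (m+1) log(m+1) ≥ (m+1) x + 1
  have h4 : x ≤ Real.log ((m:ℝ)+1) :=
    Real.log_le_log hm0 (by linarith)
  have h3 : ((m:ℝ)+1)*x + 1 ≤ ((m:ℝ)+1)*Real.log ((m:ℝ)+1) := by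
    have hq : Real.log ((m:ℝ)/(m+1)) ≤ (m:ℝ)/(m+1) - 1 :=
      Real.log_le_sub_one_of_pos (by positivity)
    rw [Real.log_div (ne_of_gt hm0) (by positivity)] at hq
    have he : (m:ℝ)/(m+1) - 1 = -(1/(m+1)) := by field_simp; ring
    have : x + 1/((m:ℝ)+1) ≤ Real.log ((m:ℝ)+1) := by linarith [hq, he.le, he.ge]
    have hm1 : (0:ℝ) < (m:ℝ)+1 := by linarith
    have hexp : ((m:ℝ)+1)*(x + 1/((m:ℝ)+1)) = ((m:ℝ)+1)*x + 1 := by field_simp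
    linarith [mul_le_mul_of_nonneg_left this hm1.le, hexp.le, hexp.ge]
  -- key product bounds
  have hA : ((2*(m:ℝ)+1)*y) * (x - y) ≤ -l2*((2*(m:ℝ)+1)*y) - y := by
    have hxy : x - y ≤ -l2 - 1/(2*(m:ℝ)+1) := by linarith
    have hny : (0:ℝ) ≤ (2*(m:ℝ)+1)*y := by positivity
    have := mul_le_mul_of_nonneg_left hxy hny
    have hid : ((2*(m:ℝ)+1)*y) * (1/(2*(m:ℝ)+1)) = y := by field_simp
    nlinarith [this, hid.le, hid.ge]
  have hB : (2*(m:ℝ)+1)*y ≤ (2*(m:ℝ)+1)*(l2+x) + 9/8 := by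
    have h1 : (2*(m:ℝ)+1)*y ≤ (2*(m:ℝ)+1)*(l2 + x + 1/(2*m)) :=
      mul_le_mul_of_nonneg_left hy1 (by positivity)
    have h2 : (2*(m:ℝ)+1)*(1/(2*m)) ≤ 9/8 := by
      rw [mul_one_div, div_le_iff₀ (by positivity)]
      linarith
    nlinarith [h1, h2]
  have hC : (2*(m:ℝ)+1)*(l2+x) ≤ (2*(m:ℝ)+1)*y := by
    apply mul_le_mul_of_nonneg_left _ (by positivity)
    have hpos : (0:ℝ) < 1/(2*(m:ℝ)+1) := by positivity
    linarith
  -- tiers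
  rcases le_or_gt 64 m with h64 | h64
  · have hx6 : 6*l2 ≤ x := by
      have : Real.log 64 ≤ Real.log m := Real.log_le_log (by norm_num) (by exact_mod_cast h64)
      have h64e : Real.log 64 = 6 * l2 := by
        rw [show (64:ℝ) = 2^6 by norm_num, Real.log_pow]; push_cast; ring
      linarith
    have hmx : (m:ℝ) * (6*l2) ≤ (m:ℝ) * x := mul_le_mul_of_nonneg_left hx6 hm0.le
    nlinarith [hA, hB, hC, hmx, mul_le_mul_of_nonneg_left hl2a hm0.le,
      mul_le_mul_of_nonneg_left hl2b hm0.le, sq_nonneg (l2 - 0.6931471803)]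
  · rcases le_or_gt 8 m with h8 | h8
    · have hm63 : (m:ℝ) ≤ 63 := by exact_mod_cast (by omega : m ≤ 63)
      have hx3 : 3*l2 ≤ x := by
        have : Real.log 8 ≤ Real.log m := Real.log_le_log (by norm_num) (by exact_mod_cast h8)
        have h8e : Real.log 8 = 3 * l2 := by
          rw [show (8:ℝ) = 2^3 by norm_num, Real.log_pow]; push_cast; ring
        linarith
      have hmx : (m:ℝ) * (3*l2) ≤ (m:ℝ) * x := mul_le_mul_of_nonneg_left hx3 hm0.le
      nlinarith [hA, hB, hC, hmx, mul_le_mul_of_nonneg_left hl2a hm0.le,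
        mul_le_mul_of_nonneg_left hl2b hm0.le, sq_nonneg (l2 - 0.6931471803),
        mul_le_mul_of_nonneg_right hm63 (le_trans (by norm_num) hl2a)]
    · -- 4 ≤ m ≤ 7 : x ≥ 2 l2
      have hx2 : 2*l2 ≤ x := by
        have : Real.log 4 ≤ Real.log m := Real.log_le_log (by norm_num) (by exact_mod_cast hm)
        have h4e : Real.log 4 = 2 * l2 := by
          rw [show (4:ℝ) = 2^2 by norm_num, Real.log_pow]; push_cast; ring
        linarith
      have hm7 : (m:ℝ) ≤ 7 := by exact_mod_cast (by omega : m ≤ 7)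
      have hmx : (m:ℝ) * (2*l2) ≤ (m:ℝ) * x := mul_le_mul_of_nonneg_left hx2 hm0.le
      nlinarith [hA, hB, hC, hmx, mul_le_mul_of_nonneg_left hl2a hm0.le,
        mul_le_mul_of_nonneg_left hl2b hm0.le, sq_nonneg (l2 - 0.6931471803),
        mul_le_mul_of_nonneg_right hm7 (le_trans (by norm_num) hl2a)]


noncomputable def Bj (n j : ℕ) : ℝ :=
  ((n.factorial : ℝ) / (n - j).factorial) ^ 2 * (1 / j.factorial)
    * (1 - (j : ℝ) / n) ^ ((n : ℝ) * Real.log n)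

lemma Bj_nonneg {n j : ℕ} (hn : 1 ≤ n) (hjn : j ≤ n) : 0 ≤ Bj n j := by
  have hn0 : (0:ℝ) < n := by exact_mod_cast hn
  have hbase : (0:ℝ) ≤ 1 - (j:ℝ)/n := by
    rw [sub_nonneg, div_le_one hn0]
    exact_mod_cast hjn
  have h1 := Real.rpow_nonneg hbase ((n : ℝ) * Real.log n)
  have h2 : (0:ℝ) ≤ ((n.factorial : ℝ) / (n - j).factorial) ^ 2 := sq_nonneg _
  have h3 : (0:ℝ) ≤ (1 : ℝ) / (j.factorial : ℝ) := by positivity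
  unfold Bj
  exact mul_nonneg (mul_nonneg h2 h3) h1

lemma Bj_succ_le {n j : ℕ} (hn : 9 ≤ n) (hj1 : n ≤ 2*j) (hj2 : j + 1 ≤ n - 1) :
    Bj n (j+1) ≤ (1/4) * Bj n j := by
  have hjn : j ≤ n := by omega
  have hn0 : (0:ℝ) < n := by exact_mod_cast (by omega : 0 < n)
  have hlogn : (0:ℝ) ≤ Real.log n := Real.log_nonneg (by exact_mod_cast (by omega : 1 ≤ n))
  have hL : (0:ℝ) ≤ (n:ℝ) * Real.log n := by positivity
  set c : ℝ := ((n - j : ℕ) : ℝ) with hc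
  have hc_eq : c = (n:ℝ) - j := by rw [hc]; push_cast [hjn]; ring
  have hc2 : (2:ℝ) ≤ c := by
    rw [hc]; exact_mod_cast (by omega : 2 ≤ n - j)
  have hc0 : (0:ℝ) < c := by linarith
  have h2c : 2*c ≤ (n:ℝ) := by
    rw [hc_eq]
    have : (n:ℝ) ≤ 2*j := by exact_mod_cast hj1
    linarith
  set L : ℝ := (n:ℝ) * Real.log n with hLdef
  set s : ℝ := ((c - 1)/c) ^ L with hs_def
  have hbase1 : (0:ℝ) ≤ (c-1)/c := div_nonneg (by linarith) hc0.le
  -- s ≤ (n^2)⁻¹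
  have hs1 : (c-1)/c ≤ Real.exp (-(1/c)) := by
    have := Real.add_one_le_exp (-(1/c))
    have hexp : (1:ℝ) - 1/c ≤ Real.exp (-(1/c)) := by linarith
    have : (c-1)/c = 1 - 1/c := by field_simp
    linarith [hexp, this.le, this.ge]
  have hs2 : s ≤ Real.exp (-(1/c)) ^ L := Real.rpow_le_rpow hbase1 hs1 hL
  have hs3 : Real.exp (-(1/c)) ^ L = Real.exp (-(1/c) * L) := (Real.exp_mul _ _).symm
  have hs4 : -(1/c) * L ≤ -(2 * Real.log n) := by
    rw [hLdef]
    rw [neg_mul, neg_le_neg_iff]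
    rw [div_mul_eq_mul_div, one_mul, le_div_iff₀ hc0]
    nlinarith [mul_le_mul_of_nonneg_right h2c hlogn]
  have hs5 : Real.exp (-(2 * Real.log n)) = (((n:ℝ))^2)⁻¹ := by
    rw [Real.exp_neg]
    congr 1
    rw [two_mul, Real.exp_add, Real.exp_log hn0]
    ring
  have hs : s ≤ (((n:ℝ))^2)⁻¹ := by
    calc s ≤ Real.exp (-(1/c)) ^ L := hs2
      _ = Real.exp (-(1/c) * L) := hs3
      _ ≤ Real.exp (-(2 * Real.log n)) := Real.exp_le_exp.2 hs4
      _ = (((n:ℝ))^2)⁻¹ := hs5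
  have hs_nonneg : 0 ≤ s := Real.rpow_nonneg hbase1 _
  -- the multiplicative identity
  have hfac1 : ((n - (j+1)).factorial : ℝ) = ((n - j).factorial : ℝ) / c := by
    have hnj : n - j = (n - (j+1)) + 1 := by omega
    rw [hnj, Nat.factorial_succ]
    push_cast
    rw [eq_div_iff (ne_of_gt hc0)]
    have : c = ((n - (j+1) : ℕ) : ℝ) + 1 := by
      rw [hc]; exact_mod_cast congrArg (Nat.cast (R := ℝ)) hnj
    rw [this]; ring
  have hfac2 : (((j+1)).factorial : ℝ) = ((j:ℝ)+1) * (j.factorial : ℝ) := by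
    rw [Nat.factorial_succ]; push_cast; ring
  have hnne : (n:ℝ) ≠ 0 := ne_of_gt hn0
  have hbsplit : (1 - ((j:ℝ)+1)/n) = (1 - (j:ℝ)/n) * ((c-1)/c) := by
    have hcne : c ≠ 0 := ne_of_gt hc0
    rw [hc_eq] at hcne ⊢
    field_simp
    ring
  have hbase0 : (0:ℝ) ≤ 1 - (j:ℝ)/n := by
    rw [sub_nonneg, div_le_one hn0]; exact_mod_cast hjn
  have hE : Bj n (j+1) = Bj n j * (c^2 * (1/((j:ℝ)+1)) * s) := by
    unfold Bj
    push_cast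
    rw [hfac1, hfac2, hbsplit, Real.mul_rpow hbase0 hbase1, ← hLdef, ← hs_def]
    have hfj : (j.factorial : ℝ) ≠ 0 := by positivity
    have hfnj : ((n - j).factorial : ℝ) ≠ 0 := by positivity
    field_simp
  have hfactor : c^2 * (1/((j:ℝ)+1)) * s ≤ 1/4 := by
    have hj0 : (0:ℝ) < (j:ℝ)+1 := by positivity
    have h1 : c^2 * (1/((j:ℝ)+1)) * s ≤ c^2 * 1 * s := by
      apply mul_le_mul_of_nonneg_right _ hs_nonneg
      apply mul_le_mul_of_nonneg_left _ (sq_nonneg c)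
      rw [div_le_one hj0]; linarith
    have h2 : c^2 * 1 * s ≤ c^2 * (((n:ℝ))^2)⁻¹ := by
      rw [mul_one]
      exact mul_le_mul_of_nonneg_left hs (sq_nonneg c)
    have h3 : c^2 * (((n:ℝ))^2)⁻¹ ≤ 1/4 := by
      rw [← div_eq_mul_inv, div_le_iff₀ (by positivity)]
      nlinarith [h2c, hc0]
    linarith
  rw [hE]
  have hBnn : 0 ≤ Bj n j := Bj_nonneg (by omega) hjn
  calc Bj n j * (c^2 * (1/((j:ℝ)+1)) * s) ≤ Bj n j * (1/4) :=
        mul_le_mul_of_nonneg_left hfactor hBnn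
    _ = (1/4) * Bj n j := by ring

lemma sum_Bj_le_top {n : ℕ} (hn : 9 ≤ n) :
    ∑ j ∈ Finset.Icc ((n+1)/2) (n-1), Bj n j ≤ (4/3) * Bj n ((n+1)/2) := by
  set j0 := (n+1)/2 with hj0
  have hj0n : j0 ≤ n - 1 := by omega
  have key : ∀ i : ℕ, j0 + i ≤ n - 1 → Bj n (j0 + i) ≤ (1/4:ℝ)^i * Bj n j0 := by
    intro i
    induction i with
    | zero => intro _; simp
    | succ i ih =>
      intro hle
      have h1 : Bj n (j0 + i + 1) ≤ (1/4) * Bj n (j0 + i) :=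
        Bj_succ_le hn (by omega) (by omega)
      have h2 := ih (by omega)
      calc Bj n (j0 + (i+1)) = Bj n (j0 + i + 1) := by ring_nf
        _ ≤ (1/4) * Bj n (j0 + i) := h1
        _ ≤ (1/4) * ((1/4:ℝ)^i * Bj n j0) := by linarith
        _ = (1/4:ℝ)^(i+1) * Bj n j0 := by ring
  have hIcc : Finset.Icc j0 (n-1) = Finset.Ico j0 n := by
    rw [← Finset.Ico_add_one_right_eq_Icc]
    congr 1
    omega
  rw [hIcc, Finset.sum_Ico_eq_sum_range]
  have hBnn : 0 ≤ Bj n j0 := Bj_nonneg (by omega) (by omega)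
  calc ∑ i ∈ Finset.range (n - j0), Bj n (j0 + i)
      ≤ ∑ i ∈ Finset.range (n - j0), (1/4:ℝ)^i * Bj n j0 := by
        apply Finset.sum_le_sum
        intro i hi
        exact key i (by simp [Finset.mem_range] at hi; omega)
    _ = (∑ i ∈ Finset.range (n - j0), (1/4:ℝ)^i) * Bj n j0 := by
        rw [Finset.sum_mul]
    _ ≤ (4/3) * Bj n j0 := by
        apply mul_le_mul_of_nonneg_right _ hBnn
        rw [geom_sum_eq (by norm_num : (1/4:ℝ) ≠ 1)]
        have : (0:ℝ) ≤ (1/4:ℝ)^(n - j0) := by positivity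
        rw [div_le_iff_of_neg (by norm_num : (1/4:ℝ) - 1 < 0)]
        linarith

lemma top_le {n : ℕ} (hn : 9 ≤ n) :
    (4/3:ℝ) * Bj n ((n+1)/2) ≤ Real.exp (1 - (3/1000) * n * Real.log n) := by
  set j0 := (n+1)/2 with hj0def
  set k0 := n - j0 with hk0def
  have hj01 : 1 ≤ j0 := by omega
  have hk01 : 1 ≤ k0 := by omega
  have hj0n : j0 ≤ n := by omega
  have hn0 : (0:ℝ) < n := by exact_mod_cast (by omega : 0 < n)
  have hk0r : (0:ℝ) < (k0:ℝ) := by exact_mod_cast hk01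
  have hfn : (0:ℝ) < (n.factorial : ℝ) := by exact_mod_cast n.factorial_pos
  have hfk : (0:ℝ) < (k0.factorial : ℝ) := by exact_mod_cast k0.factorial_pos
  have hfj : (0:ℝ) < (j0.factorial : ℝ) := by exact_mod_cast j0.factorial_pos
  have hbase : (1 - (j0:ℝ)/(n:ℝ)) = (k0:ℝ)/(n:ℝ) := by
    have : (k0:ℝ) = (n:ℝ) - j0 := by
      rw [hk0def]; push_cast [hj0n]; ring
    rw [this]; field_simp
  have hBpos : 0 < Bj n j0 := by
    unfold Bj
    rw [hbase]
    have h1 : (0:ℝ) < ((n.factorial : ℝ) / (k0.factorial : ℝ))^2 := by positivity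
    have h2 : (0:ℝ) < ((k0:ℝ)/(n:ℝ)) ^ ((n : ℝ) * Real.log n) :=
      Real.rpow_pos_of_pos (by positivity) _
    positivity
  have hlogB : Real.log (Bj n j0) = 2*Real.log (n.factorial : ℝ) - 2*Real.log (k0.factorial : ℝ)
      - Real.log (j0.factorial : ℝ) + ((n:ℝ)*Real.log n)*(Real.log (k0:ℝ) - Real.log (n:ℝ)) := by
    unfold Bj
    rw [hbase]
    have hne1 : ((n.factorial : ℝ) / (k0.factorial : ℝ))^2 ≠ 0 := by positivity
    have hne2 : (1:ℝ)/(j0.factorial : ℝ) ≠ 0 := by positivity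
    have hne3 : ((k0:ℝ)/(n:ℝ)) ^ ((n : ℝ) * Real.log n) ≠ 0 :=
      ne_of_gt (Real.rpow_pos_of_pos (by positivity) _)
    rw [Real.log_mul (mul_ne_zero hne1 hne2) hne3, Real.log_mul hne1 hne2,
      Real.log_pow, Real.log_div (ne_of_gt hfn) (ne_of_gt hfk),
      Real.log_rpow (by positivity), Real.log_div (ne_of_gt hk0r) (ne_of_gt hn0),
      one_div, Real.log_inv]
    push_cast
    ring
  have hlog43 : Real.log (4/3) ≤ 2*Real.log 2 - 1.09 := by
    rw [Real.log_div (by norm_num) (by norm_num),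
      show (4:ℝ) = 2^2 by norm_num, Real.log_pow]
    push_cast
    linarith [log3_ge]
  have hmain : Real.log (4/3) + Real.log (Bj n j0) ≤ 1 - (3/1000)*(n:ℝ)*Real.log n := by
    have h1 := log_fact_le (by omega : 1 ≤ n)
    have h2 := log_fact_ge hk01
    have h3 := log_fact_ge hj01
    rcases Nat.even_or_odd n with he | ho
    · obtain ⟨m, hm⟩ := he
      have hm5 : 5 ≤ m := by omega
      have hk0m : k0 = m := by omega
      have hj0m : j0 = m := by omega
      have hm0 : (0:ℝ) < (m:ℝ) := by exact_mod_cast (by omega : 0 < m)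
      have hnr : (n:ℝ) = 2*(m:ℝ) := by rw [hm]; push_cast; ring
      have hlogn : Real.log ((n:ℝ)) = Real.log 2 + Real.log m := by
        rw [hnr, Real.log_mul (by norm_num) (ne_of_gt hm0)]
      simp only [hk0m, hj0m] at hlogB h2 h3 ⊢
      rw [hlogn] at hlogB h1 ⊢
      rw [hnr] at hlogB h1 ⊢
      have hsc := scalar_even m hm5
      nlinarith [hlogB, h1, h2, h3, hsc, hlog43]
    · obtain ⟨m, hm⟩ := ho
      have hm4 : 4 ≤ m := by omega
      have hk0m : k0 = m := by omega
      have hj0m : j0 = m + 1 := by omega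
      have hm0 : (0:ℝ) < (m:ℝ) := by exact_mod_cast (by omega : 0 < m)
      have hnr : (n:ℝ) = 2*(m:ℝ)+1 := by rw [hm]; push_cast; ring
      simp only [hk0m, hj0m] at hlogB h2 h3 ⊢
      rw [hnr] at hlogB h1 ⊢
      push_cast at hlogB h3
      have hsc := scalar_odd m hm4
      nlinarith [hlogB, h1, h2, h3, hsc, hlog43]
  calc (4/3:ℝ) * Bj n j0 = Real.exp (Real.log (4/3) + Real.log (Bj n j0)) := by
        rw [Real.exp_add, Real.exp_log (by norm_num : (0:ℝ) < 4/3), Real.exp_log hBpos]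
    _ ≤ Real.exp (1 - (3/1000) * n * Real.log n) := by
        apply Real.exp_le_exp.2
        calc Real.log (4/3) + Real.log (Bj n j0) ≤ 1 - (3/1000)*(n:ℝ)*Real.log n := hmain
          _ = 1 - (3/1000) * n * Real.log n := by ring

/-- With `B_j = (n!/(n-j)!)² · (1/j!) · (1 - j/n)^{n log n}`, for `n ≥ 9` we have
`Σ_{j=⌈n/2⌉}^{n-1} B_j ≤ exp(1 - (3/1000)·n·log n)`. -/
theorem sum_Bj_le (n : ℕ) (hn : 9 ≤ n) :
    ∑ j ∈ Finset.Icc ((n + 1) / 2) (n - 1),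
      ((n.factorial : ℝ) / (n - j).factorial) ^ 2 * (1 / j.factorial)
        * (1 - (j : ℝ) / n) ^ ((n : ℝ) * Real.log n)
      ≤ Real.exp (1 - (3 / 1000) * n * Real.log n) := by
  calc ∑ j ∈ Finset.Icc ((n + 1) / 2) (n - 1),
      ((n.factorial : ℝ) / (n - j).factorial) ^ 2 * (1 / j.factorial)
        * (1 - (j : ℝ) / n) ^ ((n : ℝ) * Real.log n)
      = ∑ j ∈ Finset.Icc ((n + 1) / 2) (n - 1), Bj n j := rfl
    _ ≤ (4/3) * Bj n ((n+1)/2) := sum_Bj_le_top hn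
    _ ≤ Real.exp (1 - (3 / 1000) * n * Real.log n) := top_le hn
end

section
/- Let B_j = (n!/(n-j)!)^2 · (1/j!) · exp(-j·log n - 2j). For n ≥ 2, Σ_{⌈n/2⌉ ≤ j ≤ n} B_j ≤ 2·(2/e)^{3n/2}. -/
open Real Finset

private lemma pow_succ_aux (k : ℕ) (hk : 1 ≤ k) :
    Real.exp 1 * (k : ℝ) ^ (k + 1) ≤ ((k : ℝ) + 1) ^ (k + 1) := by
  have hk0 : (0 : ℝ) < k := by exact_mod_cast hk
  set x : ℝ := 1 / ((k : ℝ) + 1) with hx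
  have hx0 : 0 < x := by positivity
  have h1 : 1 - x ≤ Real.exp (-x) := by linarith [Real.add_one_le_exp (-x)]
  have h2 : (k : ℝ) * Real.exp x ≤ (k : ℝ) + 1 := by
    have hexp : 0 < Real.exp x := Real.exp_pos x
    have hone : (1 - x) * Real.exp x ≤ 1 := by
      rw [Real.exp_neg] at h1
      calc (1 - x) * Real.exp x ≤ (Real.exp x)⁻¹ * Real.exp x := by
            apply mul_le_mul_of_nonneg_right h1 hexp.le
        _ = 1 := inv_mul_cancel₀ hexp.ne'
    have hne : ((k : ℝ) + 1) ≠ 0 := by positivity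
    have hxk : (k : ℝ) = ((k : ℝ) + 1) * (1 - x) := by
      rw [hx]; field_simp; ring
    calc (k:ℝ) * Real.exp x = ((k:ℝ)+1) * ((1-x) * Real.exp x) := by
          linear_combination (Real.exp x) * hxk
      _ ≤ ((k:ℝ)+1) * 1 := mul_le_mul_of_nonneg_left hone (by positivity)
      _ = (k:ℝ)+1 := mul_one _
  have h3 : ((k : ℝ) * Real.exp x) ^ (k+1) ≤ ((k:ℝ)+1) ^ (k+1) :=
    pow_le_pow_left₀ (by positivity) h2 _
  have h4 : ((k : ℝ) * Real.exp x) ^ (k+1) = (k:ℝ)^(k+1) * Real.exp 1 := by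
    rw [mul_pow, ← Real.exp_nat_mul]
    congr 2
    rw [hx]; field_simp; norm_cast
  rw [h4] at h3
  linarith [h3]

private lemma fact_ub (k : ℕ) (hk : 1 ≤ k) :
    (k.factorial : ℝ) * Real.exp 1 ^ k ≤ (k : ℝ) ^ (k + 1) * Real.exp 1 := by
  induction k with
  | zero => omega
  | succ j ih =>
    by_cases hj0 : j = 0
    · subst hj0; norm_num [Nat.factorial]
    · have hj : 1 ≤ j := by omega
      have ihj := ih hj
      have hstep := pow_succ_aux j hj
      have hE : (0:ℝ) < Real.exp 1 := Real.exp_pos 1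
      calc ((j+1).factorial : ℝ) * Real.exp 1 ^ (j+1)
          = ((j:ℝ)+1) * ((j.factorial : ℝ) * Real.exp 1 ^ j) * Real.exp 1 := by
            push_cast [Nat.factorial_succ]; ring
        _ ≤ ((j:ℝ)+1) * ((j : ℝ) ^ (j + 1) * Real.exp 1) * Real.exp 1 := by
            have := mul_le_mul_of_nonneg_left ihj (by positivity : (0:ℝ) ≤ (j:ℝ)+1)
            exact mul_le_mul_of_nonneg_right this hE.le
        _ = ((j:ℝ)+1) * (Real.exp 1 * (j:ℝ)^(j+1)) * Real.exp 1 := by ring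
        _ ≤ ((j:ℝ)+1) * (((j:ℝ)+1)^(j+1)) * Real.exp 1 := by
            apply mul_le_mul_of_nonneg_right _ hE.le
            exact mul_le_mul_of_nonneg_left hstep (by positivity)
        _ = (((j:ℝ)+1)) ^ (j+1+1) * Real.exp 1 := by ring
        _ = (((j+1:ℕ)):ℝ) ^ (j+1+1) * Real.exp 1 := by push_cast; ring

private lemma cb_ub (k : ℕ) (hk : 1 ≤ k) :
    ((Nat.centralBinom k : ℝ)) ^ 2 * (3 * k + 1) ≤ 16 ^ k := by
  induction k with
  | zero => omega
  | succ j ih =>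
    by_cases hj0 : j = 0
    · subst hj0
      have : Nat.centralBinom 1 = 2 := by decide
      rw [this]; norm_num
    · have hj : 1 ≤ j := by omega
      have ihj := ih hj
      have hrec : ((j:ℝ) + 1) * (Nat.centralBinom (j+1) : ℝ)
          = 2 * (2 * (j:ℝ) + 1) * (Nat.centralBinom j : ℝ) := by
        exact_mod_cast congrArg (Nat.cast (R := ℝ)) (Nat.succ_mul_centralBinom_succ j)
      have hj1 : (1:ℝ) ≤ (j:ℝ) := by exact_mod_cast hj
      have hpos : (0:ℝ) < ((j:ℝ)+1)^2 * (3*(j:ℝ)+1) := by positivity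
      have hsq : (((j:ℝ)+1) * (Nat.centralBinom (j+1) : ℝ))^2
          = (2 * (2*(j:ℝ)+1) * (Nat.centralBinom j : ℝ))^2 := by rw [hrec]
      have key : ((Nat.centralBinom (j+1) : ℝ)^2 * (3*(j:ℝ)+4)) * (((j:ℝ)+1)^2 * (3*(j:ℝ)+1))
          ≤ (16:ℝ)^(j+1) * (((j:ℝ)+1)^2 * (3*(j:ℝ)+1)) := by
        calc ((Nat.centralBinom (j+1) : ℝ)^2 * (3*(j:ℝ)+4)) * (((j:ℝ)+1)^2 * (3*(j:ℝ)+1))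
            = (((j:ℝ)+1) * (Nat.centralBinom (j+1) : ℝ))^2 * ((3*(j:ℝ)+4) * (3*(j:ℝ)+1)) := by
              ring
          _ = (2 * (2*(j:ℝ)+1) * (Nat.centralBinom j : ℝ))^2 * ((3*(j:ℝ)+4) * (3*(j:ℝ)+1)) := by
              rw [hsq]
          _ = ((Nat.centralBinom j : ℝ)^2 * (3*(j:ℝ)+1)) * (4 * (2*(j:ℝ)+1)^2 * (3*(j:ℝ)+4)) := by
              ring
          _ ≤ (16:ℝ)^j * (4 * (2*(j:ℝ)+1)^2 * (3*(j:ℝ)+4)) := by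
              apply mul_le_mul_of_nonneg_right _ (by positivity)
              exact_mod_cast ihj
          _ ≤ (16:ℝ)^j * (16 * ((j:ℝ)+1)^2 * (3*(j:ℝ)+1)) := by
              apply mul_le_mul_of_nonneg_left _ (by positivity)
              nlinarith [hj1]
          _ = (16:ℝ)^(j+1) * (((j:ℝ)+1)^2 * (3*(j:ℝ)+1)) := by ring
      have goal' : (Nat.centralBinom (j+1) : ℝ)^2 * (3*(j:ℝ)+4) ≤ (16:ℝ)^(j+1) :=
        le_of_mul_le_mul_right key hpos
      calc (Nat.centralBinom (j+1) : ℝ)^2 * (3*((j+1:ℕ):ℝ)+1)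
          = (Nat.centralBinom (j+1) : ℝ)^2 * (3*(j:ℝ)+4) := by push_cast; ring
        _ ≤ (16:ℝ)^(j+1) := goal'

private lemma fact_split (k : ℕ) :
    ((2*k).factorial : ℝ) = (Nat.centralBinom k : ℝ) * (k.factorial:ℝ) * (k.factorial:ℝ) := by
  have h := Nat.choose_mul_factorial_mul_factorial (show k ≤ 2*k by omega)
  have h2 : 2*k - k = k := by omega
  rw [h2] at h
  have : (2*k).factorial = Nat.centralBinom k * k.factorial * k.factorial := by
    rw [Nat.centralBinom_eq_two_mul_choose, ← h]
  exact_mod_cast congrArg (Nat.cast (R := ℝ)) this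

private lemma kE_le (k : ℕ) (hk : 1 ≤ k) : (k:ℝ) * Real.exp 1 ≤ 3*(k:ℝ)+1 := by
  have h := Real.exp_one_lt_d9
  have hk1 : (1:ℝ) ≤ (k:ℝ) := by exact_mod_cast hk
  nlinarith

private lemma even_key (k : ℕ) (hk : 1 ≤ k) :
    (((2*k).factorial : ℝ))^2 * Real.exp 1 ^ k ≤ ((k.factorial:ℝ))^3 * 16^k * (k:ℝ)^k := by
  have hC := cb_ub k hk
  have hF := fact_ub k hk
  have hkE := kE_le k hk
  have h31 : (0:ℝ) < 3*(k:ℝ)+1 := by positivity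
  have core : (Nat.centralBinom k:ℝ)^2 * ((k.factorial:ℝ) * Real.exp 1^k) ≤ 16^k * (k:ℝ)^k := by
    have step1 : (Nat.centralBinom k:ℝ)^2 * ((k.factorial:ℝ)*Real.exp 1^k) * (3*(k:ℝ)+1)
        ≤ 16^k * ((k:ℝ)^(k+1) * Real.exp 1) := by
      calc (Nat.centralBinom k:ℝ)^2 * ((k.factorial:ℝ)*Real.exp 1^k) * (3*(k:ℝ)+1)
          = ((Nat.centralBinom k:ℝ)^2 * (3*(k:ℝ)+1)) * ((k.factorial:ℝ)*Real.exp 1^k) := by ring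
        _ ≤ 16^k * ((k:ℝ)^(k+1) * Real.exp 1) := by
            apply mul_le_mul _ hF (by positivity) (by positivity)
            exact_mod_cast hC
    have step3 : (16^k * (k:ℝ)^k) * ((k:ℝ)*Real.exp 1) ≤ (16^k * (k:ℝ)^k) * (3*(k:ℝ)+1) :=
      mul_le_mul_of_nonneg_left hkE (by positivity)
    have step2 : (16:ℝ)^k * ((k:ℝ)^(k+1) * Real.exp 1) = (16^k * (k:ℝ)^k) * ((k:ℝ)*Real.exp 1) := by
      ring
    have final : (Nat.centralBinom k:ℝ)^2 * ((k.factorial:ℝ)*Real.exp 1^k) * (3*(k:ℝ)+1)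
        ≤ (16^k * (k:ℝ)^k) * (3*(k:ℝ)+1) := by
      rw [step2] at step1; linarith
    exact le_of_mul_le_mul_right final h31
  calc (((2*k).factorial : ℝ))^2 * Real.exp 1 ^ k
      = ((k.factorial:ℝ))^3 * ((Nat.centralBinom k:ℝ)^2 * ((k.factorial:ℝ) * Real.exp 1^k)) := by
        rw [fact_split]; ring
    _ ≤ ((k.factorial:ℝ))^3 * (16^k * (k:ℝ)^k) :=
        mul_le_mul_of_nonneg_left core (by positivity)
    _ = ((k.factorial:ℝ))^3 * 16^k * (k:ℝ)^k := by ring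

private lemma odd_key (k : ℕ) (hk : 1 ≤ k) :
    5 * (((2*k+1).factorial : ℝ))^2 * Real.exp 1 ^ k
      ≤ 4 * ((k.factorial:ℝ))^2 * (((k+1).factorial:ℝ)) * ((2*(k:ℝ)+1))^(k+1) * 2^(3*k+1)
          * Real.exp 1 := by
  have hC := cb_ub k hk
  have hF := fact_ub k hk
  have hk1 : (1:ℝ) ≤ (k:ℝ) := by exact_mod_cast hk
  have hE : (0:ℝ) < Real.exp 1 := Real.exp_pos 1
  have h31 : (0:ℝ) < 3*(k:ℝ)+1 := by positivity
  have hsucc : ((2*k+1).factorial : ℝ) = (2*(k:ℝ)+1) * ((2*k).factorial : ℝ) := by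
    push_cast [Nat.factorial_succ]
    ring
  have hfs : (((k+1).factorial:ℝ)) = ((k:ℝ)+1) * (k.factorial:ℝ) := by
    push_cast [Nat.factorial_succ]; ring
  set x := (k:ℝ) with hx
  set C := (Nat.centralBinom k : ℝ) with hCdef
  set F := (k.factorial : ℝ) with hFdef
  have hF0 : (0:ℝ) < F := by rw [hFdef]; exact_mod_cast k.factorial_pos
  have hpow : (16:ℝ)^k * x^k ≤ 8^k * (2*x+1)^k := by
    calc (16:ℝ)^k * x^k = (16*x)^k := by rw [mul_pow]
      _ ≤ (8*(2*x+1))^k := by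
          apply pow_le_pow_left₀ (by positivity) (by linarith)
      _ = 8^k * (2*x+1)^k := by rw [mul_pow]
  have hpoly : 5*(2*x+1)^2*x ≤ 8*(x+1)*(2*x+1)*(3*x+1) := by nlinarith
  have core : (5*(2*x+1)^2 * C^2 * (F * Real.exp 1 ^ k)) * (3*x+1)
      ≤ (4*(x+1)*(2*x+1)^(k+1) * 2^(3*k+1) * Real.exp 1) * (3*x+1) := by
    have e2 : (2:ℝ)^(3*k+1) = 2 * 8^k := by
      rw [pow_succ, pow_mul]; norm_num; ring
    calc (5*(2*x+1)^2 * C^2 * (F * Real.exp 1 ^ k)) * (3*x+1)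
        = (C^2 * (3*x+1)) * (F * Real.exp 1 ^ k) * (5*(2*x+1)^2) := by ring
      _ ≤ ((16:ℝ)^k) * (x^(k+1) * Real.exp 1) * (5*(2*x+1)^2) := by
          apply mul_le_mul_of_nonneg_right _ (by positivity)
          apply mul_le_mul _ hF (by positivity) (by positivity)
          exact_mod_cast hC
      _ = ((16:ℝ)^k * x^k) * ((5*(2*x+1)^2*x) * Real.exp 1) := by ring
      _ ≤ (8^k * (2*x+1)^k) * ((8*(x+1)*(2*x+1)*(3*x+1)) * Real.exp 1) := by
          apply mul_le_mul hpow _ (by positivity) (by positivity)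
          exact mul_le_mul_of_nonneg_right hpoly hE.le
      _ = (4*(x+1)*(2*x+1)^(k+1) * (2*8^k) * Real.exp 1) * (3*x+1) := by ring
      _ = (4*(x+1)*(2*x+1)^(k+1) * 2^(3*k+1) * Real.exp 1) * (3*x+1) := by rw [e2]
  have core' : 5*(2*x+1)^2 * C^2 * (F * Real.exp 1 ^ k)
      ≤ 4*(x+1)*(2*x+1)^(k+1) * 2^(3*k+1) * Real.exp 1 :=
    le_of_mul_le_mul_right core h31
  calc 5 * (((2*k+1).factorial : ℝ))^2 * Real.exp 1 ^ k
      = (5*(2*x+1)^2 * C^2 * (F * Real.exp 1 ^ k)) * F^3 := by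
        rw [hsucc, fact_split]; ring
    _ ≤ (4*(x+1)*(2*x+1)^(k+1) * 2^(3*k+1) * Real.exp 1) * F^3 :=
        mul_le_mul_of_nonneg_right core' (by positivity)
    _ = 4 * F^2 * (((k+1).factorial:ℝ)) * ((2*x+1))^(k+1) * 2^(3*k+1) * Real.exp 1 := by
        rw [hfs]; ring

private lemma exp_part (N j : ℕ) (hN : 0 < N) :
    Real.exp (-(j:ℝ) * Real.log N - 2*(j:ℝ)) = (((N:ℝ))^j * Real.exp 1 ^ (2*j))⁻¹ := by
  have hN' : (0:ℝ) < N := by exact_mod_cast hN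
  have h1 : Real.exp ((j:ℝ) * Real.log N) = (N:ℝ)^j := by
    rw [Real.exp_nat_mul, Real.exp_log hN']
  have h2 : Real.exp (2*(j:ℝ)) = Real.exp 1 ^ (2*j) := by
    rw [← Real.exp_nat_mul]
    congr 1
    push_cast; ring
  rw [show -(j:ℝ)*Real.log N - 2*(j:ℝ) = -((j:ℝ)*Real.log N + 2*(j:ℝ)) by ring,
      Real.exp_neg, Real.exp_add, h1, h2]

private lemma even_case (k : ℕ) (hk : 1 ≤ k) :
    (((2*k).factorial : ℝ) / ((k.factorial:ℝ)))^2 * (1/(k.factorial:ℝ)) *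
      ((((2*k:ℕ)):ℝ)^k * Real.exp 1 ^ (2*k))⁻¹ ≤ (2/Real.exp 1)^(3*k) := by
  have hE : (0:ℝ) < Real.exp 1 := Real.exp_pos 1
  have hfk : (0:ℝ) < (k.factorial:ℝ) := by exact_mod_cast k.factorial_pos
  have h2k : (0:ℝ) < ((2*k:ℕ):ℝ) := by
    have : 0 < 2*k := by omega
    exact_mod_cast this
  have lhs_eq : (((2*k).factorial : ℝ) / ((k.factorial:ℝ)))^2 * (1/(k.factorial:ℝ)) *
      ((((2*k:ℕ)):ℝ)^k * Real.exp 1 ^ (2*k))⁻¹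
      = ((2*k).factorial:ℝ)^2 / ((k.factorial:ℝ)^3 * ((2*k:ℕ):ℝ)^k * Real.exp 1 ^(2*k)) := by
    field_simp
  have rhs_eq : ((2:ℝ)/Real.exp 1)^(3*k) = 2^(3*k) / Real.exp 1 ^(3*k) := div_pow _ _ _
  rw [lhs_eq, rhs_eq, div_le_div_iff₀ (by positivity) (by positivity)]
  have key := even_key k hk
  have e1 : ((2*k:ℕ):ℝ)^k = 2^k * (k:ℝ)^k := by push_cast; rw [mul_pow]
  have e2 : (2:ℝ)^(3*k) = 8^k := by rw [pow_mul]; norm_num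
  have e3 : (16:ℝ)^k = 8^k * 2^k := by rw [← mul_pow]; norm_num
  calc ((2*k).factorial:ℝ)^2 * Real.exp 1^(3*k)
      = (((2*k).factorial:ℝ)^2 * Real.exp 1^k) * Real.exp 1^(2*k) := by
        ring
    _ ≤ (((k.factorial:ℝ))^3 * 16^k * (k:ℝ)^k) * Real.exp 1^(2*k) :=
        mul_le_mul_of_nonneg_right key (by positivity)
    _ = 2^(3*k) * ((k.factorial:ℝ)^3 * ((2*k:ℕ):ℝ)^k * Real.exp 1^(2*k)) := by
        rw [e1, e2, e3]; ring

private lemma odd_case (k : ℕ) (hk : 1 ≤ k) :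
    (((2*k+1).factorial : ℝ) / ((k.factorial:ℝ)))^2 * (1/((k+1).factorial:ℝ)) *
      ((((2*k+1:ℕ)):ℝ)^(k+1) * Real.exp 1 ^ (2*(k+1)))⁻¹
      ≤ (2/Real.exp 1) ^ (3*((2*k+1:ℕ):ℝ)/2) := by
  have hE : (0:ℝ) < Real.exp 1 := Real.exp_pos 1
  have hb : (0:ℝ) < 2/Real.exp 1 := by positivity
  have hfk : (0:ℝ) < (k.factorial:ℝ) := by exact_mod_cast k.factorial_pos
  have hfk1 : (0:ℝ) < ((k+1).factorial:ℝ) := by exact_mod_cast (k+1).factorial_pos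
  have h2k : (0:ℝ) < ((2*k+1:ℕ):ℝ) := by
    have : 0 < 2*k+1 := by omega
    exact_mod_cast this
  have hexp_split : ((2:ℝ)/Real.exp 1) ^ (3*((2*k+1:ℕ):ℝ)/2)
      = ((2:ℝ)/Real.exp 1) ^ ((3*k+1 : ℕ):ℝ) * ((2:ℝ)/Real.exp 1) ^ ((1:ℝ)/2) := by
    rw [← Real.rpow_add hb]
    congr 1
    push_cast; ring
  have hsqrt : (4/5 : ℝ) ≤ ((2:ℝ)/Real.exp 1) ^ ((1:ℝ)/2) := by
    rw [← Real.sqrt_eq_rpow]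
    rw [Real.le_sqrt (by norm_num) (by positivity)]
    rw [le_div_iff₀ hE]
    nlinarith [Real.exp_one_lt_d9]
  have hmain : (((2*k+1).factorial : ℝ) / ((k.factorial:ℝ)))^2 * (1/((k+1).factorial:ℝ)) *
      ((((2*k+1:ℕ)):ℝ)^(k+1) * Real.exp 1 ^ (2*(k+1)))⁻¹
      ≤ ((2:ℝ)/Real.exp 1)^(3*k+1) * (4/5) := by
    have lhs_eq : (((2*k+1).factorial : ℝ) / ((k.factorial:ℝ)))^2 * (1/((k+1).factorial:ℝ)) *
        ((((2*k+1:ℕ)):ℝ)^(k+1) * Real.exp 1 ^ (2*(k+1)))⁻¹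
        = ((2*k+1).factorial:ℝ)^2 /
            ((k.factorial:ℝ)^2 * ((k+1).factorial:ℝ) * ((2*k+1:ℕ):ℝ)^(k+1)
              * Real.exp 1 ^(2*(k+1))) := by
      field_simp
    have rhs_eq : ((2:ℝ)/Real.exp 1)^(3*k+1) * (4/5)
        = (4 * 2^(3*k+1)) / (5 * Real.exp 1 ^(3*k+1)) := by
      rw [div_pow]; ring
    rw [lhs_eq, rhs_eq, div_le_div_iff₀ (by positivity) (by positivity)]
    have key := odd_key k hk
    have hc : ((2*k+1:ℕ):ℝ) = 2*(k:ℝ)+1 := by push_cast; ring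
    calc ((2*k+1).factorial:ℝ)^2 * (5 * Real.exp 1 ^(3*k+1))
        = (5 * ((2*k+1).factorial:ℝ)^2 * Real.exp 1 ^ k) * Real.exp 1 ^(2*k+1) := by
          ring
      _ ≤ (4 * ((k.factorial:ℝ))^2 * (((k+1).factorial:ℝ)) * ((2*(k:ℝ)+1))^(k+1) * 2^(3*k+1)
          * Real.exp 1) * Real.exp 1 ^(2*k+1) :=
          mul_le_mul_of_nonneg_right key (by positivity)
      _ = 4 * 2^(3*k+1) * ((k.factorial:ℝ)^2 * ((k+1).factorial:ℝ) * ((2*k+1:ℕ):ℝ)^(k+1)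
            * Real.exp 1 ^(2*(k+1))) := by
          rw [hc]; ring
  rw [hexp_split]
  refine hmain.trans ?_
  rw [Real.rpow_natCast]
  exact mul_le_mul_of_nonneg_left hsqrt (by positivity)

private lemma Bm_le (n : ℕ) (hn : 2 ≤ n) :
    ((n.factorial : ℝ) / (((n - (n+1)/2).factorial:ℝ)))^2 * (1/((((n+1)/2).factorial:ℝ))) *
      Real.exp (-(((n+1)/2:ℕ):ℝ) * Real.log n - 2*(((n+1)/2:ℕ):ℝ))
      ≤ (2/Real.exp 1) ^ (3*(n:ℝ)/2) := by
  rcases Nat.even_or_odd n with he | ho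
  · obtain ⟨k, hk⟩ := he
    have hn2 : n = 2*k := by omega
    subst hn2
    have hk1 : 1 ≤ k := by omega
    have hm : (2*k+1)/2 = k := by omega
    have hnm : 2*k - k = k := by omega
    rw [hm, hnm, exp_part (2*k) k (by omega)]
    have hexp_eq : (3*((2*k:ℕ):ℝ)/2) = ((3*k:ℕ):ℝ) := by push_cast; ring
    rw [hexp_eq, Real.rpow_natCast]
    exact even_case k hk1
  · obtain ⟨k, hk⟩ := ho
    subst hk
    have hk1 : 1 ≤ k := by omega
    have hm : (2*k+1+1)/2 = k+1 := by omega
    have hnm : 2*k+1 - (k+1) = k := by omega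
    rw [hm, hnm, exp_part (2*k+1) (k+1) (by omega)]
    exact odd_case k hk1

private lemma ratio_step (n j : ℕ) (hn : 2 ≤ n) (hmj : (n+1)/2 ≤ j) (hjn : j < n) :
    ((n.factorial : ℝ) / (((n - (j+1)).factorial:ℝ)))^2 * (1/(((j+1).factorial:ℝ))) *
      Real.exp (-((j+1:ℕ):ℝ) * Real.log n - 2*((j+1:ℕ):ℝ))
    ≤ 1/2 * (((n.factorial : ℝ) / (((n - j).factorial:ℝ)))^2 * (1/((j.factorial:ℝ))) *
      Real.exp (-(j:ℝ) * Real.log n - 2*(j:ℝ))) := by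
  have hn0 : (0:ℝ) < (n:ℝ) := by exact_mod_cast (by omega : 0 < n)
  have hE : (0:ℝ) < Real.exp 1 := Real.exp_pos 1
  have hfn : (0:ℝ) < (n.factorial:ℝ) := by exact_mod_cast n.factorial_pos
  have hfj : (0:ℝ) < (j.factorial:ℝ) := by exact_mod_cast j.factorial_pos
  have hfs : (0:ℝ) < ((n - (j+1)).factorial:ℝ) := by exact_mod_cast (n - (j+1)).factorial_pos
  have hnj : (0:ℝ) < (n:ℝ) - (j:ℝ) := by
    have : (j:ℝ) < (n:ℝ) := by exact_mod_cast hjn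
    linarith
  have hfsub : ((n - j).factorial : ℝ) = ((n:ℝ) - (j:ℝ)) * ((n - (j+1)).factorial : ℝ) := by
    have h1 : n - j = (n - (j+1)) + 1 := by omega
    rw [h1, Nat.factorial_succ]
    push_cast [Nat.cast_sub (show j+1 ≤ n by omega)]
    ring
  have hfact : ((j+1).factorial:ℝ) = ((j:ℝ)+1) * (j.factorial:ℝ) := by
    push_cast [Nat.factorial_succ]; ring
  have hexp : Real.exp (-((j+1:ℕ):ℝ) * Real.log n - 2*((j+1:ℕ):ℝ))
      = Real.exp (-(j:ℝ) * Real.log n - 2*(j:ℝ)) * ((n:ℝ) * (Real.exp 1 * Real.exp 1))⁻¹ := by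
    have hprod : (n:ℝ) * (Real.exp 1 * Real.exp 1) = Real.exp (Real.log n + (1+1)) := by
      rw [Real.exp_add, Real.exp_log hn0, Real.exp_add]
    rw [hprod, ← Real.exp_neg, ← Real.exp_add]
    congr 1
    push_cast; ring
  have heq : ((n.factorial : ℝ) / (((n - (j+1)).factorial:ℝ)))^2 * (1/(((j+1).factorial:ℝ))) *
      Real.exp (-((j+1:ℕ):ℝ) * Real.log n - 2*((j+1:ℕ):ℝ))
      = (((n.factorial : ℝ) / (((n - j).factorial:ℝ)))^2 * (1/((j.factorial:ℝ))) *
        Real.exp (-(j:ℝ) * Real.log n - 2*(j:ℝ)))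
        * (((n:ℝ) - (j:ℝ))^2 / (((j:ℝ)+1) * (n:ℝ) * (Real.exp 1 * Real.exp 1))) := by
    rw [hexp, hfact, hfsub]
    field_simp
  rw [heq]
  have hbody : (0:ℝ) ≤ ((n.factorial : ℝ) / (((n - j).factorial:ℝ)))^2 * (1/((j.factorial:ℝ))) *
      Real.exp (-(j:ℝ) * Real.log n - 2*(j:ℝ)) := by positivity
  have hr : ((n:ℝ) - (j:ℝ))^2 / (((j:ℝ)+1) * (n:ℝ) * (Real.exp 1 * Real.exp 1)) ≤ 1/2 := by
    rw [div_le_iff₀ (by positivity)]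
    have hE2 : (2:ℝ) ≤ Real.exp 1 := by linarith [Real.add_one_le_exp 1]
    have hEE : (4:ℝ) ≤ Real.exp 1 * Real.exp 1 := by nlinarith
    have h2j : (n:ℝ) ≤ 2*(j:ℝ) := by exact_mod_cast (by omega : n ≤ 2*j)
    have hprod2 : (2*((n:ℝ) - (j:ℝ))) * ((n:ℝ) - (j:ℝ)) ≤ (n:ℝ) * (j:ℝ) := by
      apply mul_le_mul (by linarith) (by linarith) (by linarith) (by linarith)
    have hj0 : (0:ℝ) ≤ (j:ℝ) := by positivity
    nlinarith [mul_nonneg (mul_nonneg hn0.le (by linarith : (0:ℝ) ≤ (j:ℝ)+1))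
      (by linarith : (0:ℝ) ≤ Real.exp 1 * Real.exp 1 - 4)]
  calc (((n.factorial : ℝ) / (((n - j).factorial:ℝ)))^2 * (1/((j.factorial:ℝ))) *
        Real.exp (-(j:ℝ) * Real.log n - 2*(j:ℝ)))
        * (((n:ℝ) - (j:ℝ))^2 / (((j:ℝ)+1) * (n:ℝ) * (Real.exp 1 * Real.exp 1)))
      ≤ (((n.factorial : ℝ) / (((n - j).factorial:ℝ)))^2 * (1/((j.factorial:ℝ))) *
        Real.exp (-(j:ℝ) * Real.log n - 2*(j:ℝ))) * (1/2) :=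
        mul_le_mul_of_nonneg_left hr hbody
    _ = 1/2 * (((n.factorial : ℝ) / (((n - j).factorial:ℝ)))^2 * (1/((j.factorial:ℝ))) *
        Real.exp (-(j:ℝ) * Real.log n - 2*(j:ℝ))) := by ring

/-- With `B_j = (n!/(n-j)!)² · (1/j!) · exp(-j·log n - 2j)`, for `n ≥ 2` we have
`Σ_{⌈n/2⌉ ≤ j ≤ n} B_j ≤ 2·(2/e)^{3n/2}`. -/
theorem sum_Bj_cont_le (n : ℕ) (hn : 2 ≤ n) :
    ∑ j ∈ Finset.Icc ((n + 1) / 2) n,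
      ((n.factorial : ℝ) / (n - j).factorial) ^ 2 * (1 / j.factorial)
        * Real.exp (-(j : ℝ) * Real.log n - 2 * j)
      ≤ 2 * (2 / Real.exp 1) ^ (3 * (n : ℝ) / 2) := by
  set m := (n + 1) / 2 with hm
  have hmn : m ≤ n := by omega
  set c : ℝ := ((n.factorial : ℝ) / ((n - m).factorial:ℝ))^2 * (1/((m.factorial:ℝ))) *
      Real.exp (-(m:ℝ) * Real.log n - 2*(m:ℝ)) with hc
  have hc0 : 0 ≤ c := by rw [hc]; positivity
  have hterm : ∀ j, m ≤ j → j ≤ n →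
      ((n.factorial : ℝ) / ((n - j).factorial:ℝ))^2 * (1/((j.factorial:ℝ))) *
        Real.exp (-(j:ℝ) * Real.log n - 2*(j:ℝ)) ≤ c * (1/2)^(j - m) := by
    intro j hj1 hj2
    induction j, hj1 using Nat.le_induction with
    | base => simp [hc]
    | succ j hj ih =>
      have hjn : j < n := by omega
      have h1 := ratio_step n j hn (hm ▸ hj) hjn
      have h2 := ih (by omega)
      calc ((n.factorial : ℝ) / ((n - (j+1)).factorial:ℝ))^2 * (1/(((j+1).factorial:ℝ))) *
            Real.exp (-((j+1:ℕ):ℝ) * Real.log n - 2*((j+1:ℕ):ℝ))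
          ≤ 1/2 * (((n.factorial : ℝ) / ((n - j).factorial:ℝ))^2 * (1/((j.factorial:ℝ))) *
            Real.exp (-(j:ℝ) * Real.log n - 2*(j:ℝ))) := h1
        _ ≤ 1/2 * (c * (1/2)^(j - m)) := by linarith
        _ = c * (1/2)^(j + 1 - m) := by
            rw [show j + 1 - m = (j - m) + 1 by omega, pow_succ]
            ring
  have hsum1 : ∑ j ∈ Finset.Icc m n,
      ((n.factorial : ℝ) / ((n - j).factorial:ℝ))^2 * (1/((j.factorial:ℝ))) *
        Real.exp (-(j:ℝ) * Real.log n - 2*(j:ℝ))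
      ≤ ∑ j ∈ Finset.Icc m n, c * (1/2)^(j - m) := by
    apply Finset.sum_le_sum
    intro j hj
    rw [Finset.mem_Icc] at hj
    exact hterm j hj.1 hj.2
  have hsum2 : ∑ j ∈ Finset.Icc m n, c * (1/2:ℝ)^(j - m) ≤ c * 2 := by
    rw [← Finset.Ico_add_one_right_eq_Icc, Finset.sum_Ico_eq_sum_range]
    simp only [Nat.add_sub_cancel_left]
    rw [← Finset.mul_sum]
    exact mul_le_mul_of_nonneg_left (sum_geometric_two_le _) hc0
  have hBm := Bm_le n hn
  calc ∑ j ∈ Finset.Icc m n,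
      ((n.factorial : ℝ) / ((n - j).factorial:ℝ))^2 * (1/((j.factorial:ℝ))) *
        Real.exp (-(j:ℝ) * Real.log n - 2*(j:ℝ))
      ≤ c * 2 := le_trans hsum1 hsum2
    _ = 2 * c := by ring
    _ ≤ 2 * (2 / Real.exp 1) ^ (3 * (n : ℝ) / 2) := by
        apply mul_le_mul_of_nonneg_left _ (by norm_num)
        rw [hc]
        exact hBm
end

section
/- For integers n > 2 and n/2 ≤ j < n, the ratio B_{j+1}/B_j with B_j = (n!/(n-j)!)^2 (1/j!) (1 - j/n)^{n log n} satisfies B_{j+1}/B_j ≤ 2/n. -/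
open Real

/-- For integers `n > 2` and `n/2 ≤ j < n`, the ratio `B_{j+1}/B_j` with
`B_j = (n!/(n-j)!)² (1/j!) (1 - j/n)^{n log n}` satisfies `B_{j+1}/B_j ≤ 2/n`. -/
theorem Bj_ratio_le (n j : ℕ) (hn : 2 < n) (hj : (n : ℝ) / 2 ≤ j) (hjn : j < n) :
    (((n.factorial : ℝ) / (n - (j + 1)).factorial) ^ 2 * (1 / (j + 1).factorial)
        * (1 - ((j : ℝ) + 1) / n) ^ ((n : ℝ) * Real.log n))
      / (((n.factorial : ℝ) / (n - j).factorial) ^ 2 * (1 / j.factorial)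
        * (1 - (j : ℝ) / n) ^ ((n : ℝ) * Real.log n))
      ≤ 2 / n := by
  have hn0 : (0:ℝ) < n := by positivity
  have hn3 : (3:ℝ) ≤ n := by exact_mod_cast hn
  have hlog : 0 < Real.log n := Real.log_pos (by linarith)
  have hE : 0 < (n:ℝ) * Real.log n := by positivity
  have hjr : (j:ℝ) < n := by exact_mod_cast hjn
  have ha : 0 < 1 - (j:ℝ)/n := by
    rw [sub_pos, div_lt_one hn0]; exact hjr
  by_cases hc : j + 1 = n
  · have hb0 : 1 - ((j:ℝ) + 1)/n = 0 := by
      have : ((j:ℝ) + 1) = n := by exact_mod_cast hc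
      rw [this, div_self hn0.ne', sub_self]
    rw [hb0, Real.zero_rpow hE.ne', mul_zero, zero_div]
    positivity
  · -- j + 1 < n
    have hjn1 : j + 1 < n := lt_of_le_of_ne hjn hc
    set x : ℝ := (n:ℝ) - j with hxdef
    have hx2 : 2 ≤ x := by
      have : (j:ℝ) + 2 ≤ n := by exact_mod_cast hjn1
      simp only [hxdef]; linarith
    have hx0 : 0 < x := by linarith
    have hxle : x ≤ (n:ℝ)/2 := by simp only [hxdef]; linarith
    have hb : 0 < 1 - ((j:ℝ)+1)/n := by
      rw [sub_pos, div_lt_one hn0]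
      have : ((j:ℝ) + 2) ≤ n := by exact_mod_cast hjn1
      linarith
    set E : ℝ := (n:ℝ) * Real.log n with hEdef
    set F : ℝ := (n.factorial : ℝ) / (n - j).factorial with hFdef
    have hF : 0 < F := by positivity
    have hjf : (0:ℝ) < (j.factorial : ℝ) := by positivity
    -- factorial identities
    have hfac : (n - j).factorial = (n - j) * (n - (j+1)).factorial := by
      have h : n - j = (n - (j+1)) + 1 := by omega
      rw [h, Nat.factorial_succ]
    have hcast : ((n - j : ℕ) : ℝ) = x := by
      rw [Nat.cast_sub hjn.le]
    have hcast2 : ((n - j).factorial : ℝ) = x * ((n - (j+1)).factorial : ℝ) := by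
      rw [hfac, Nat.cast_mul, hcast]
    have e1 : ((n.factorial : ℝ) / ((n - (j + 1)).factorial)) = F * x := by
      have hd : ((n - (j+1)).factorial : ℝ) ≠ 0 := by positivity
      rw [hFdef, hcast2]
      field_simp
    have e2 : (((j + 1).factorial : ℕ) : ℝ) = ((j:ℝ) + 1) * (j.factorial : ℝ) := by
      rw [Nat.factorial_succ]; push_cast; ring
    -- denominator positive
    have hD : 0 < F ^ 2 * (1 / (j.factorial:ℝ)) * (1 - (j:ℝ)/n) ^ E := by
      have : (0:ℝ) < (1 - (j:ℝ)/n) ^ E := Real.rpow_pos_of_pos ha E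
      positivity
    set Q : ℝ := (1 - (j:ℝ)/n) ^ E with hQdef
    set P : ℝ := (1 - ((j:ℝ)+1)/n) ^ E with hPdef
    set R : ℝ := (n:ℝ) ^ (-((n:ℝ)/x)) with hRdef
    have hQ : 0 < Q := Real.rpow_pos_of_pos ha E
    have hR : 0 < R := Real.rpow_pos_of_pos hn0 _
    -- key inequality : P ≤ R * Q
    have hkey : P ≤ R * Q := by
      have hab : 1 - ((j:ℝ)+1)/n = (1 - (j:ℝ)/n) * ((x - 1)/x) := by
        field_simp
        ring
      have hmul : P = Q * ((x - 1)/x) ^ E := by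
        rw [hPdef, hab, Real.mul_rpow ha.le (div_nonneg (by linarith) hx0.le)]
      have hfrac : (x - 1)/x ≤ Real.exp (-(1/x)) := by
        have h1 : (x - 1)/x = 1 - 1/x := by field_simp
        rw [h1]
        have := Real.add_one_le_exp (-(1/x))
        linarith
      have hstep : ((x - 1)/x) ^ E ≤ (Real.exp (-(1/x))) ^ E :=
        Real.rpow_le_rpow (div_nonneg (by linarith) hx0.le) hfrac hE.le
      have hexp : (Real.exp (-(1/x))) ^ E = R := by
        rw [Real.rpow_def_of_pos (Real.exp_pos _), Real.log_exp,
          hRdef, Real.rpow_def_of_pos hn0]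
        congr 1
        rw [hEdef]
        ring
      rw [hmul]
      calc Q * ((x - 1)/x) ^ E ≤ Q * R := by
            rw [← hexp]; exact mul_le_mul_of_nonneg_left hstep hQ.le
        _ = R * Q := mul_comm _ _
    -- x^2 * R ≤ 1
    have hxR : x ^ 2 * R ≤ 1 := by
      have hxn : x ≤ n := by linarith
      have h2le : (2:ℝ) ≤ (n:ℝ)/x := by
        rw [le_div_iff₀ hx0]; linarith
      have h1 : x ^ 2 ≤ (n:ℝ) ^ (2:ℕ) := by
        exact pow_le_pow_left₀ hx0.le hxn 2
      have h2 : ((n:ℝ)) ^ ((2:ℕ):ℝ) ≤ (n:ℝ) ^ ((n:ℝ)/x) := by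
        apply Real.rpow_le_rpow_of_exponent_le (by linarith) (by exact_mod_cast h2le)
      have h3 : x ^ 2 ≤ (n:ℝ) ^ ((n:ℝ)/x) := by
        calc x ^ 2 ≤ (n:ℝ) ^ (2:ℕ) := h1
          _ = ((n:ℝ)) ^ ((2:ℕ):ℝ) := (Real.rpow_natCast _ 2).symm
          _ ≤ (n:ℝ) ^ ((n:ℝ)/x) := h2
      have hRinv : R = ((n:ℝ) ^ ((n:ℝ)/x))⁻¹ := by
        rw [hRdef, Real.rpow_neg hn0.le]
      have hpos : 0 < (n:ℝ) ^ ((n:ℝ)/x) := Real.rpow_pos_of_pos hn0 _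
      rw [hRinv]
      calc x ^ 2 * ((n:ℝ) ^ ((n:ℝ)/x))⁻¹
          ≤ (n:ℝ) ^ ((n:ℝ)/x) * ((n:ℝ) ^ ((n:ℝ)/x))⁻¹ :=
            mul_le_mul_of_nonneg_right h3 (inv_nonneg.2 hpos.le)
        _ = 1 := mul_inv_cancel₀ hpos.ne' 
    -- assemble
    rw [div_le_iff₀ hD, e1]
    have hgoal : (F * x) ^ 2 * (1 / ((j + 1).factorial : ℝ)) * P
        ≤ 2 / n * (F ^ 2 * (1 / (j.factorial:ℝ)) * Q) := by
      rw [e2]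
      have hj1 : (0:ℝ) < (j:ℝ) + 1 := by positivity
      calc (F * x) ^ 2 * (1 / (((j:ℝ) + 1) * (j.factorial:ℝ))) * P
          ≤ (F * x) ^ 2 * (1 / (((j:ℝ) + 1) * (j.factorial:ℝ))) * (R * Q) := by
            apply mul_le_mul_of_nonneg_left hkey (by positivity)
        _ = (x ^ 2 * R) * (F ^ 2 * Q / (((j:ℝ) + 1) * (j.factorial:ℝ))) := by ring
        _ ≤ 1 * (F ^ 2 * Q / (((j:ℝ) + 1) * (j.factorial:ℝ))) := by
            apply mul_le_mul_of_nonneg_right hxR (by positivity)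
        _ = F ^ 2 * Q / (((j:ℝ) + 1) * (j.factorial:ℝ)) := one_mul _
        _ ≤ 2 / n * (F ^ 2 * (1 / (j.factorial:ℝ)) * Q) := by
            rw [div_le_iff₀ (by positivity : (0:ℝ) < ((j:ℝ) + 1) * (j.factorial:ℝ))]
            have heq : 2 / (n:ℝ) * (F ^ 2 * (1 / (j.factorial:ℝ)) * Q) * (((j:ℝ) + 1) * (j.factorial:ℝ))
                = (F ^ 2 * Q) * (2 * ((j:ℝ) + 1) / n) := by
              field_simp
            rw [heq]
            have h1 : (1:ℝ) ≤ 2 * ((j:ℝ) + 1) / n := by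
              rw [le_div_iff₀ hn0]; linarith
            exact le_mul_of_one_le_right (by positivity) h1
    exact hgoal
end

section
/- Let φ(σ) denote the number of fixed points of a permutation σ ∈ S_n. The function f(σ) = √((n-1)/(n-2)) · (φ(σ) - 2) if σ(1) = 1, and f(σ) = √((n-1)/(n-2)) · (φ(σ) - 1 + 1/(n-1)) if σ(1) ≠ 1, is an eigenfunction of the transpose-top-with-random convolution operator with eigenvalue 1 - 1/n, i.e., Σ_τ q(τ) f(στ^{-1}) = (1 - 1/n)·f(σ) for all σ, where q is uniform on {(1,i) : 1 ≤ i ≤ n} (with (1,1) = identity). -/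
/-- Let `φ(σ)` be the number of fixed points of `σ ∈ S_n`, `n ≥ 3`.  The function
`f(σ) = √((n-1)/(n-2)) · (φ(σ) - 2)` if `σ(1) = 1`, and
`f(σ) = √((n-1)/(n-2)) · (φ(σ) - 1 + 1/(n-1))` otherwise, is an eigenfunction of the
transpose-top-with-random convolution operator with eigenvalue `1 - 1/n`:
`Σ_τ q(τ) f(στ⁻¹) = (1 - 1/n)·f(σ)`, where `q` is uniform on `{(1,i) : 1 ≤ i ≤ n}`
(with `(1,1)` the identity). -/
theorem transpose_top_eigenfunction (n : ℕ) (hn : 3 ≤ n)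
    (f : Equiv.Perm (Fin n) → ℝ)
    (hf : ∀ σ : Equiv.Perm (Fin n),
      f σ = Real.sqrt (((n : ℝ) - 1) / ((n : ℝ) - 2)) *
        (if σ ⟨0, by omega⟩ = (⟨0, by omega⟩ : Fin n)
          then ((Finset.univ.filter fun i => σ i = i).card : ℝ) - 2
          else ((Finset.univ.filter fun i => σ i = i).card : ℝ) - 1 + 1 / ((n : ℝ) - 1)))
    (σ : Equiv.Perm (Fin n)) :
    ∑ i : Fin n, (1 / (n : ℝ)) * f (σ * (Equiv.swap ⟨0, by omega⟩ i)⁻¹)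
      = (1 - 1 / (n : ℝ)) * f σ := by
  haveI : NeZero n := ⟨by omega⟩
  have hz0 : (⟨0, by omega⟩ : Fin n) = (0 : Fin n) := rfl
  simp only [hz0] at hf ⊢
  have hn3 : (3:ℝ) ≤ (n:ℝ) := by exact_mod_cast hn
  set e := 1 / ((n:ℝ) - 1) with he
  set c := Real.sqrt (((n : ℝ) - 1) / ((n : ℝ) - 2)) with hc
  set Φ : Equiv.Perm (Fin n) → ℝ :=
    fun π => ∑ j : Fin n, (if π j = j then (1:ℝ) else 0) with hΦ
  have hcard : ∀ π : Equiv.Perm (Fin n),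
      ((Finset.univ.filter fun i => π i = i).card : ℝ) = Φ π := by
    intro π
    rw [Finset.card_filter]
    push_cast
    rfl
  have hf' : ∀ π : Equiv.Perm (Fin n),
      f π = c * (Φ π + if π 0 = 0 then (-2:ℝ) else -1 + e) := by
    intro π
    rw [hf π, hcard π]
    split_ifs with h <;> ring
  have helper : ∀ (j : Fin n) (A : ℝ) (B : Fin n → ℝ),
      ∑ i : Fin n, (if i = j then A else B i) = A - B j + ∑ i : Fin n, B i := by
    intro j A B
    have h1 : ∀ i : Fin n, (if i = j then A else B i)
        = (if i = j then A - B i else 0) + B i := by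
      intro i; split_ifs <;> ring
    rw [Finset.sum_congr rfl fun i _ => h1 i, Finset.sum_add_distrib,
      Finset.sum_ite_eq' Finset.univ j (fun i => A - B i)]
    simp
  -- sum of fixed-point counts
  have hΦsum : ∑ i : Fin n, Φ (σ * Equiv.swap 0 i)
      = 2 - (n:ℝ) * (if σ 0 = 0 then (1:ℝ) else 0) + ((n:ℝ) - 1) * Φ σ := by
    simp only [hΦ, Equiv.Perm.mul_apply]
    rw [Finset.sum_comm]
    have hinner : ∀ j : Fin n,
        (∑ i : Fin n, if σ (Equiv.swap 0 i j) = j then (1:ℝ) else 0)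
        = if j = 0 then (1:ℝ)
          else ((if σ 0 = j then (1:ℝ) else 0) + ((n:ℝ)-1) * (if σ j = j then 1 else 0)) := by
      intro j
      by_cases hj : j = 0
      · subst hj
        rw [if_pos rfl]
        have h1 : ∀ i : Fin n, (if σ (Equiv.swap 0 i 0) = 0 then (1:ℝ) else 0)
            = if i = σ.symm 0 then (1:ℝ) else 0 := by
          intro i
          rw [Equiv.swap_apply_left]
          exact if_congr (Equiv.apply_eq_iff_eq_symm_apply σ) rfl rfl
        rw [Finset.sum_congr rfl fun i _ => h1 i,
          Finset.sum_ite_eq' Finset.univ (σ.symm 0) (fun _ => (1:ℝ))]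
        simp
      · rw [if_neg hj]
        have h1 : ∀ i : Fin n, (if σ (Equiv.swap 0 i j) = j then (1:ℝ) else 0)
            = if i = j then (if σ 0 = j then (1:ℝ) else 0)
              else (if σ j = j then (1:ℝ) else 0) := by
          intro i
          by_cases hij : i = j
          · subst hij; rw [if_pos rfl, Equiv.swap_apply_right]
          · rw [if_neg hij, Equiv.swap_apply_of_ne_of_ne hj (fun h => hij h.symm)]
        rw [Finset.sum_congr rfl fun i _ => h1 i,
          helper j _ (fun _ => if σ j = j then (1:ℝ) else 0)]
        rw [Finset.sum_const, Finset.card_univ, Fintype.card_fin]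
        ring
    erw [Finset.sum_congr rfl fun j _ => hinner j,
      helper 0 1 (fun j => (if σ 0 = j then (1:ℝ) else 0) + ((n:ℝ)-1) * (if σ j = j then 1 else 0))]
    have h2 : ∑ j : Fin n,
        ((if σ 0 = j then (1:ℝ) else 0) + ((n:ℝ)-1) * (if σ j = j then 1 else 0))
        = 1 + ((n:ℝ)-1) * Φ σ := by
      rw [Finset.sum_add_distrib, ← Finset.mul_sum,
        Finset.sum_ite_eq Finset.univ (σ 0) (fun _ => (1:ℝ))]
      simp [hΦ]
    rw [h2]
    split_ifs <;> ring
  -- sum of the correction terms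
  have hBsum : ∑ i : Fin n, (if σ i = 0 then (-2:ℝ) else -1 + e)
      = (n:ℝ) * (-1 + e) + (-1 - e) := by
    have h1 : ∀ i : Fin n, (if σ i = 0 then (-2:ℝ) else -1 + e)
        = if i = σ.symm 0 then (-2:ℝ) else -1 + e := by
      intro i
      exact if_congr (Equiv.apply_eq_iff_eq_symm_apply σ) rfl rfl
    rw [Finset.sum_congr rfl fun i _ => h1 i, helper (σ.symm 0) (-2) (fun _ => -1 + e)]
    rw [Finset.sum_const, Finset.card_univ, Fintype.card_fin]
    ring
  -- put everything together
  simp only [hf', Equiv.swap_inv]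
  have key : ∀ i : Fin n, (σ * Equiv.swap 0 i) 0 = σ i := by
    intro i; simp [Equiv.Perm.mul_apply]
  simp only [key]
  have lhs_eq : ∑ i : Fin n, (1 / (n:ℝ)) * (c * (Φ (σ * Equiv.swap 0 i)
        + if σ i = 0 then (-2:ℝ) else -1 + e))
      = (1 / (n:ℝ)) * c * ((∑ i : Fin n, Φ (σ * Equiv.swap 0 i))
        + ∑ i : Fin n, (if σ i = 0 then (-2:ℝ) else -1 + e)) := by
    rw [mul_add (1 / (n:ℝ) * c), Finset.mul_sum, Finset.mul_sum, ← Finset.sum_add_distrib]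
    apply Finset.sum_congr rfl
    intro i _
    ring
  rw [lhs_eq, hΦsum, hBsum]
  have hne1 : (n:ℝ) ≠ 0 := by positivity
  have hne2 : (n:ℝ) - 1 ≠ 0 := by nlinarith
  rw [he]
  by_cases h : σ 0 = 0
  · simp only [if_pos h]
    field_simp
    ring
  · simp only [if_neg h]
    field_simp
    ring
end

section
/- Let φ(σ) be the number of fixed points of σ ∈ S_n. The function φ - 1 is an eigenfunction of the random transposition convolution operator with eigenvalue 1 - 2/n: Σ_τ q(τ)·(φ(στ^{-1}) - 1) = (1 - 2/n)·(φ(σ) - 1) for all σ ∈ S_n, where q assigns probability 1/n to the identity and 2/n² to each transposition. -/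
open Finset Equiv
open scoped Classical

lemma sum_ind_one {n : ℕ} (σ : Equiv.Perm (Fin n)) (k : Fin n) :
    ∑ j : Fin n, (if σ j = k then (1:ℝ) else 0) = 1 := by
  simp only [Equiv.apply_eq_iff_eq_symm_apply]
  simp [Finset.sum_ite_eq']

lemma inner_sum' {n : ℕ} (σ : Equiv.Perm (Fin n)) (k : Fin n) :
    ∑ p ∈ (univ : Finset (Fin n)).offDiag,
        (if σ (Equiv.swap p.1 p.2 k) = k then (1:ℝ) else 0)
      = 2 + ((n:ℝ)^2 - 3*n) * (if σ k = k then 1 else 0) := by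
  have hn1 : 1 ≤ n := Fin.pos k
  set x : ℝ := if σ k = k then 1 else 0 with hx
  set F : Fin n × Fin n → ℝ := fun p => if σ (Equiv.swap p.1 p.2 k) = k then 1 else 0 with hF
  have hdiag : ∑ p ∈ (univ : Finset (Fin n)).diag, F p = n * x := by
    rw [Finset.sum_diag]
    simp [hF, hx, Equiv.swap_self, mul_comm]
  have hg : ∀ i ∈ (univ : Finset (Fin n)).erase k,
      (∑ j : Fin n, F (i, j)) = (if σ i = k then (1:ℝ) else 0) + ((n:ℝ) - 1) * x := by
    intro i hi
    have hik : i ≠ k := (Finset.mem_erase.1 hi).1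
    rw [← Finset.add_sum_erase _ _ (Finset.mem_univ k)]
    have h1 : F (i, k) = if σ i = k then (1:ℝ) else 0 := by
      simp [hF, Equiv.swap_apply_right]
    have h2 : ∀ j ∈ (univ : Finset (Fin n)).erase k, F (i, j) = x := by
      intro j hj
      have hjk : j ≠ k := (Finset.mem_erase.1 hj).1
      simp [hF, hx, Equiv.swap_apply_of_ne_of_ne (Ne.symm hik) (Ne.symm hjk)]
    rw [h1, Finset.sum_congr rfl h2, Finset.sum_const, Finset.card_erase_of_mem (Finset.mem_univ k)]
    simp [Nat.cast_sub hn1]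
  have htot : ∑ p ∈ (univ : Finset (Fin n)) ×ˢ (univ : Finset (Fin n)), F p
      = 2 + (((n:ℝ) - 1)^2 - 1) * x := by
    rw [Finset.sum_product]
    rw [← Finset.add_sum_erase _ _ (Finset.mem_univ k)]
    have hk : (∑ j : Fin n, F (k, j)) = 1 := by
      simpa [hF, Equiv.swap_apply_left] using sum_ind_one σ k
    rw [hk, Finset.sum_congr rfl hg, Finset.sum_add_distrib, Finset.sum_const,
      Finset.card_erase_of_mem (Finset.mem_univ k)]
    have herase : ∑ i ∈ (univ : Finset (Fin n)).erase k, (if σ i = k then (1:ℝ) else 0)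
        = 1 - x := by
      have := Finset.add_sum_erase univ (fun i => if σ i = k then (1:ℝ) else 0)
        (Finset.mem_univ k)
      rw [sum_ind_one σ k] at this
      rw [hx]
      linarith [this]
    rw [herase]
    simp only [Finset.card_univ, Fintype.card_fin, nsmul_eq_mul, Nat.cast_sub hn1, Nat.cast_one]
    ring
  have hsplit : ∑ p ∈ (univ : Finset (Fin n)).diag, F p
      + ∑ p ∈ (univ : Finset (Fin n)).offDiag, F p
      = ∑ p ∈ (univ : Finset (Fin n)) ×ˢ (univ : Finset (Fin n)), F p := by
    rw [← Finset.sum_union (Finset.disjoint_diag_offDiag _), Finset.diag_union_offDiag]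
  rw [hdiag, htot] at hsplit
  have : ∑ p ∈ (univ : Finset (Fin n)).offDiag, F p = 2 + (((n:ℝ)-1)^2 - 1) * x - n * x := by
    linarith
  rw [this]; ring

lemma swap_eq_swap_iff' {α} [DecidableEq α] {a b i j : α} (hab : a ≠ b) (_hij : i ≠ j) :
    Equiv.swap a b = Equiv.swap i j ↔ (a = i ∧ b = j) ∨ (a = j ∧ b = i) := by
  constructor
  · intro h
    have h2 : Equiv.swap i j a = b := by rw [← h, Equiv.swap_apply_left]
    rw [Equiv.swap_apply_def] at h2
    split_ifs at h2 with h3 h4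
    · exact Or.inl ⟨h3, h2.symm⟩
    · exact Or.inr ⟨h4, h2.symm⟩
    · exact absurd h2 hab
  · rintro (⟨rfl, rfl⟩ | ⟨rfl, rfl⟩)
    · rfl
    · exact Equiv.swap_comm a b

lemma sum_over_swaps {n : ℕ} (g : Equiv.Perm (Fin n) → ℝ) :
    ∑ p ∈ (univ : Finset (Fin n)).offDiag, g (Equiv.swap p.1 p.2)
      = 2 * ∑ τ ∈ univ.filter Equiv.Perm.IsSwap, g τ := by
  have key := Finset.sum_fiberwise_eq_sum_filter' (univ : Finset (Fin n)).offDiag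
    (univ.filter Equiv.Perm.IsSwap) (fun p => Equiv.swap p.1 p.2) g
  have hfilt : ((univ : Finset (Fin n)).offDiag.filter
      fun p => Equiv.swap p.1 p.2 ∈ univ.filter Equiv.Perm.IsSwap)
      = (univ : Finset (Fin n)).offDiag := by
    apply Finset.filter_true_of_mem
    intro p hp
    have hne : p.1 ≠ p.2 := (Finset.mem_offDiag.1 hp).2.2
    exact Finset.mem_filter.2 ⟨Finset.mem_univ _, ⟨p.1, p.2, hne, rfl⟩⟩
  rw [hfilt] at key
  rw [← key, Finset.mul_sum]
  apply Finset.sum_congr rfl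
  intro τ hτ
  obtain ⟨i, j, hij, rfl⟩ := (Finset.mem_filter.1 hτ).2
  have hfib : ((univ : Finset (Fin n)).offDiag.filter
      fun p => Equiv.swap p.1 p.2 = Equiv.swap i j) = {(i, j), (j, i)} := by
    ext ⟨a, b⟩
    simp only [Finset.mem_filter, Finset.mem_offDiag, Finset.mem_univ, true_and,
      Finset.mem_insert, Finset.mem_singleton, Prod.mk.injEq]
    constructor
    · rintro ⟨hab, h⟩
      exact (swap_eq_swap_iff' hab hij).1 h
    · rintro (⟨rfl, rfl⟩ | ⟨rfl, rfl⟩)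
      · exact ⟨hij, rfl⟩
      · exact ⟨hij.symm, Equiv.swap_comm a b⟩
  rw [hfib, Finset.sum_pair (by simp [hij, Prod.ext_iff] : ((i:Fin n), j) ≠ (j, i))]
  ring

open scoped Classical in
/-- Let `φ(σ)` be the number of fixed points of `σ ∈ S_n`, `n ≥ 2`.  The function
`φ - 1` is an eigenfunction of the random transposition convolution operator with
eigenvalue `1 - 2/n`: `Σ_τ q(τ)·(φ(στ⁻¹) - 1) = (1 - 2/n)·(φ(σ) - 1)`, where `q`
assigns probability `1/n` to the identity and `2/n²` to each transposition. -/
theorem random_transposition_eigenfunction (n : ℕ) (hn : 2 ≤ n)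
    (σ : Equiv.Perm (Fin n)) :
    ∑ τ : Equiv.Perm (Fin n),
        (if τ = 1 then 1 / (n : ℝ) else if τ.IsSwap then 2 / (n : ℝ) ^ 2 else 0) *
          (((Finset.univ.filter fun i => (σ * τ⁻¹) i = i).card : ℝ) - 1)
      = (1 - 2 / (n : ℝ)) *
          (((Finset.univ.filter fun i => σ i = i).card : ℝ) - 1) := by
  have hn0 : (n:ℝ) ≠ 0 := by positivity
  set g : Equiv.Perm (Fin n) → ℝ :=
    fun τ => ((Finset.univ.filter fun i => (σ * τ⁻¹) i = i).card : ℝ) - 1 with hgdef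
  set φ : ℝ := ((Finset.univ.filter fun i => σ i = i).card : ℝ) with hφ
  have hg1 : g 1 = φ - 1 := by simp [hgdef, hφ]; rfl
  -- split the sum over permutations
  have hterm : ∀ τ : Equiv.Perm (Fin n),
      (if τ = 1 then 1 / (n : ℝ) else if τ.IsSwap then 2 / (n : ℝ) ^ 2 else 0) * g τ
        = (if τ = 1 then (1 / (n:ℝ)) * g τ else 0)
          + (if τ.IsSwap then (2 / (n:ℝ)^2) * g τ else 0) := by
    intro τ
    by_cases h1 : τ = 1
    · subst h1
      have hns : ¬ (1 : Equiv.Perm (Fin n)).IsSwap := by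
        rintro ⟨x, y, hxy, h⟩
        exact hxy (Equiv.swap_eq_one_iff.1 h.symm)
      simp [hns]
    · by_cases h2 : τ.IsSwap <;> simp [h1, h2]
  have hstep1 : ∑ τ : Equiv.Perm (Fin n),
      (if τ = 1 then 1 / (n : ℝ) else if τ.IsSwap then 2 / (n : ℝ) ^ 2 else 0) * g τ
      = (1 / (n:ℝ)) * (φ - 1)
        + (2 / (n:ℝ)^2) * ∑ τ ∈ univ.filter Equiv.Perm.IsSwap, g τ := by
    rw [Finset.sum_congr rfl fun τ _ => hterm τ, Finset.sum_add_distrib]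
    congr 1
    · rw [Finset.sum_ite_eq' univ (1 : Equiv.Perm (Fin n))]
      simp [hg1]
    · rw [← Finset.sum_filter, Finset.mul_sum]
  -- compute the sum over swaps via offDiag
  have hoff : ∑ p ∈ (univ : Finset (Fin n)).offDiag, g (Equiv.swap p.1 p.2)
      = ((n:ℝ)^2 - 3*n) * (φ - 1) := by
    have hgp : ∀ p ∈ (univ : Finset (Fin n)).offDiag,
        g (Equiv.swap p.1 p.2)
          = (∑ k : Fin n, if σ (Equiv.swap p.1 p.2 k) = k then (1:ℝ) else 0) - 1 := by
      intro p _
      simp only [hgdef, Equiv.swap_inv]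
      congr 1
      show ((Finset.univ.filter fun i => (σ * Equiv.swap p.1 p.2) i = i).card : ℝ) = _
      rw [Finset.card_filter, Nat.cast_sum]
      exact Finset.sum_congr rfl fun k _ => by rw [Nat.cast_ite, Nat.cast_one, Nat.cast_zero]; rfl
    rw [Finset.sum_congr rfl hgp, Finset.sum_sub_distrib, Finset.sum_const, Finset.sum_comm]
    have hcardoff : ((univ : Finset (Fin n)).offDiag.card : ℝ) = (n:ℝ)^2 - n := by
      rw [Finset.offDiag_card]
      have h1 : n ≤ n * n := Nat.le_mul_of_pos_left n (by omega)
      simp only [Finset.card_univ, Fintype.card_fin]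
      push_cast [Nat.cast_sub h1]
      ring
    have hinner : ∑ k : Fin n, ∑ p ∈ (univ : Finset (Fin n)).offDiag,
        (if σ (Equiv.swap p.1 p.2 k) = k then (1:ℝ) else 0)
        = 2 * n + ((n:ℝ)^2 - 3*n) * φ := by
      rw [Finset.sum_congr rfl fun k _ => inner_sum' σ k, Finset.sum_add_distrib,
        Finset.sum_const, ← Finset.mul_sum]
      have hφ2 : ∑ k : Fin n, (if σ k = k then (1:ℝ) else 0) = φ := by
        rw [hφ]
        push_cast [Finset.card_filter]
        rfl
      rw [hφ2]
      simp [mul_comm]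
    rw [hinner, nsmul_eq_mul, hcardoff]
    ring
  rw [sum_over_swaps g] at hoff
  show (∑ τ : Equiv.Perm (Fin n),
      (if τ = 1 then 1 / (n : ℝ) else if τ.IsSwap then 2 / (n : ℝ) ^ 2 else 0) * g τ)
    = (1 - 2 / (n : ℝ)) * (φ - 1)
  rw [hstep1]
  have hswaps : ∑ τ ∈ univ.filter Equiv.Perm.IsSwap, g τ
      = ((n:ℝ)^2 - 3*n) * (φ - 1) / 2 := by linarith
  rw [hswaps]
  field_simp
  ring
end
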